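/- arXiv:2205.09090 — 4 statements merged into one kernel-verified Lean document; each statement's English description precedes it below -/
import Mathlib

section
/- For every n ≥ 1, the central binomial coefficients satisfy the recursion C(n, ⌊n/2⌋) = C(n−1, ⌊(n−1)/2⌋) + Σ_{i=1}^{⌊n/2⌋} C_{i−1} · C(n−2i, ⌊(n−2i)/2⌋), where C_m = (1/(m+1))·binom(2m, m) denotes the m-th Catalan number. -/
lemma cb_step (j : ℕ) :
    Nat.centralBinom (j + 1) + 2 * catalan j = 4 * Nat.centralBinom j := by
  have h1 := Nat.succ_mul_centralBinom_succ j
  have h2 := succ_mul_catalan_eq_centralBinom j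
  have key : (j + 1) * (Nat.centralBinom (j + 1) + 2 * catalan j)
      = (j + 1) * (4 * Nat.centralBinom j) := by nlinarith [h1, h2]
  exact Nat.eq_of_mul_eq_mul_left (Nat.succ_pos j) key

lemma cat_conv (n : ℕ) :
    2 * ∑ k ∈ Finset.range (n + 1), catalan k * Nat.centralBinom (n - k)
      = Nat.centralBinom (n + 1) := by
  induction n with
  | zero => norm_num [Nat.centralBinom]
  | succ n ih =>
      have hB : ∑ k ∈ Finset.range (n + 1), catalan k * catalan (n - k) = catalan (n + 1) := by
        rw [catalan_succ n]
        exact (Fin.sum_univ_eq_sum_range (fun i => catalan i * catalan (n - i)) (n + 1)).symm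
      have hA : ∑ k ∈ Finset.range (n + 1),
            (catalan k * Nat.centralBinom (n + 1 - k) + 2 * (catalan k * catalan (n - k)))
          = ∑ k ∈ Finset.range (n + 1), 4 * (catalan k * Nat.centralBinom (n - k)) := by
        refine Finset.sum_congr rfl fun k hk => ?_
        have hk' : k ≤ n := Nat.lt_succ_iff.mp (Finset.mem_range.mp hk)
        have e : n + 1 - k = (n - k) + 1 := by omega
        rw [e]
        have := cb_step (n - k)
        nlinarith [this]
      rw [Finset.sum_add_distrib, ← Finset.mul_sum, ← Finset.mul_sum, hB] at hA
      have hs : ∑ k ∈ Finset.range (n + 1 + 1), catalan k * Nat.centralBinom (n + 1 - k)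
          = (∑ k ∈ Finset.range (n + 1), catalan k * Nat.centralBinom (n + 1 - k))
            + catalan (n + 1) := by
        rw [Finset.sum_range_succ]
        simp [Nat.centralBinom]
      have hstep := cb_step (n + 1)
      omega

lemma two_mul_choose_central_odd (j : ℕ) :
    2 * (2 * j + 1).choose j = Nat.centralBinom (j + 1) := by
  have h1 : Nat.centralBinom (j + 1) = (2 * j + 2).choose (j + 1) := by
    rw [Nat.centralBinom_eq_two_mul_choose, show 2 * (j + 1) = 2 * j + 2 by ring]
  have h2 : (2 * j + 2).choose (j + 1) = (2 * j + 1).choose j + (2 * j + 1).choose (j + 1) :=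
    Nat.choose_succ_succ' (2 * j + 1) j
  have h3 : (2 * j + 1).choose (j + 1) = (2 * j + 1).choose j := by
    have := Nat.choose_symm (n := 2 * j + 1) (k := j + 1) (by omega)
    have e : 2 * j + 1 - (j + 1) = j := by omega
    rw [e] at this
    exact this.symm
  omega

/-- The recursion for central binomial coefficients:
`C(n, ⌊n/2⌋) = C(n-1, ⌊(n-1)/2⌋) + Σ_{i=1}^{⌊n/2⌋} C_{i-1} · C(n-2i, ⌊(n-2i)/2⌋)`,
where `C_m` denotes the `m`-th Catalan number. -/
theorem central_binomial_recursion (n : ℕ) (hn : 1 ≤ n) :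
    Nat.choose n (n / 2) =
      Nat.choose (n - 1) ((n - 1) / 2) +
        ∑ i ∈ Finset.Icc 1 (n / 2),
          catalan (i - 1) * Nat.choose (n - 2 * i) ((n - 2 * i) / 2) := by
  rcases Nat.even_or_odd n with ⟨m, rfl⟩ | ⟨m, rfl⟩
  · -- even case, n = m + m, m ≥ 1
    obtain ⟨j, rfl⟩ : ∃ j, m = j + 1 := ⟨m - 1, by omega⟩
    have e1 : (j + 1 + (j + 1)) / 2 = j + 1 := by omega
    have e2 : (j + 1 + (j + 1) - 1) = 2 * j + 1 := by omega
    have e3 : (2 * j + 1) / 2 = j := by omega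
    rw [e1, e2, e3]
    have hsum : ∑ i ∈ Finset.Icc 1 (j + 1),
          catalan (i - 1) * (j + 1 + (j + 1) - 2 * i).choose ((j + 1 + (j + 1) - 2 * i) / 2)
        = ∑ k ∈ Finset.range (j + 1), catalan k * Nat.centralBinom (j - k) := by
      rw [← Finset.Ico_add_one_right_eq_Icc, Finset.sum_Ico_eq_sum_range]
      have : j + 1 + 1 - 1 = j + 1 := by omega
      rw [this]
      refine Finset.sum_congr rfl fun k hk => ?_
      have hk' : k < j + 1 := Finset.mem_range.mp hk
      have a1 : 1 + k - 1 = k := by omega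
      have a2 : j + 1 + (j + 1) - 2 * (1 + k) = 2 * (j - k) := by omega
      have a3 : 2 * (j - k) / 2 = j - k := by omega
      rw [a1, a2, a3, Nat.centralBinom_eq_two_mul_choose]
    rw [hsum]
    have hl : (j + 1 + (j + 1)).choose (j + 1) = Nat.centralBinom (j + 1) := by
      rw [Nat.centralBinom_eq_two_mul_choose, two_mul]
    rw [hl]
    have h1 := two_mul_choose_central_odd j
    have h2 := cat_conv j
    omega
  · -- odd case, n = 2 * m + 1
    have e1 : (2 * m + 1) / 2 = m := by omega
    have e2 : 2 * m + 1 - 1 = 2 * m := by omega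
    have e3 : (2 * m) / 2 = m := by omega
    rw [e1, e2, e3]
    have hsum : ∑ i ∈ Finset.Icc 1 m,
          catalan (i - 1) * (2 * m + 1 - 2 * i).choose ((2 * m + 1 - 2 * i) / 2)
        = ∑ k ∈ Finset.range m, catalan k * (2 * (m - 1 - k) + 1).choose (m - 1 - k) := by
      rw [← Finset.Ico_add_one_right_eq_Icc, Finset.sum_Ico_eq_sum_range]
      have : m + 1 - 1 = m := by omega
      rw [this]
      refine Finset.sum_congr rfl fun k hk => ?_
      have hk' : k < m := Finset.mem_range.mp hk
      have a1 : 1 + k - 1 = k := by omega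
      have a2 : 2 * m + 1 - 2 * (1 + k) = 2 * (m - 1 - k) + 1 := by omega
      have a3 : (2 * (m - 1 - k) + 1) / 2 = m - 1 - k := by omega
      rw [a1, a2, a3]
    rw [hsum]
    have hQ : 2 * ∑ k ∈ Finset.range m, catalan k * (2 * (m - 1 - k) + 1).choose (m - 1 - k)
        = ∑ k ∈ Finset.range m, catalan k * Nat.centralBinom (m - k) := by
      rw [Finset.mul_sum]
      refine Finset.sum_congr rfl fun k hk => ?_
      have hk' : k < m := Finset.mem_range.mp hk
      rw [mul_left_comm, two_mul_choose_central_odd (m - 1 - k)]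
      have : m - 1 - k + 1 = m - k := by omega
      rw [this]
    have hP : ∑ k ∈ Finset.range (m + 1), catalan k * Nat.centralBinom (m - k)
        = (∑ k ∈ Finset.range m, catalan k * Nat.centralBinom (m - k))
          + catalan m := by
      rw [Finset.sum_range_succ]
      simp [Nat.centralBinom]
    have h1 := two_mul_choose_central_odd m
    have h2 := cat_conv m
    have h3 := cb_step m
    have h4 : (2 * m).choose m = Nat.centralBinom m := (Nat.centralBinom_eq_two_mul_choose m).symm
    rw [h4]
    omega
end

section
/- For every n ≥ 1 and every a with 0 ≤ 2a ≤ n, the number of 321-avoiding involutions in S_n whose cycle decomposition contains exactly a transpositions (i.e., exactly 2a non-fixed points) equals n!·(n−2a+1)! / (a!·(n−2a)!·(n−a+1)!), equivalently C(n, a) − C(n, a−1). -/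
/-- `w` is a permutation of `{1,…,n}` (i.e. fixes every point outside `{1,…,n}`)
which is an involution: `w² = 1`. -/
def IsInvolutionOn (n : ℕ) (w : Equiv.Perm ℕ) : Prop :=
  (∀ k : ℕ, w k ≠ k → 1 ≤ k ∧ k ≤ n) ∧ w * w = 1

/-- `w ∈ S_n` is 321-avoiding: there are no indices `1 ≤ p < q < r ≤ n` with
`w(p) > w(q) > w(r)`. -/
def Avoids321 (n : ℕ) (w : Equiv.Perm ℕ) : Prop :=
  ∀ p q r : ℕ, 1 ≤ p → p < q → q < r → r ≤ n → ¬ (w q < w p ∧ w r < w q)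

/-- `mi n` is the number of 321-avoiding involutions in `S_n`. -/
noncomputable def mi (n : ℕ) : ℕ :=
  Set.ncard {w : Equiv.Perm ℕ | IsInvolutionOn n w ∧ Avoids321 n w}

/-- `mia n a` is the number of 321-avoiding involutions in `S_n` whose cycle decomposition
contains exactly `a` transpositions, i.e. with exactly `2a` non-fixed points. -/
noncomputable def mia (n a : ℕ) : ℕ :=
  Set.ncard {w : Equiv.Perm ℕ |
    IsInvolutionOn n w ∧ Avoids321 n w ∧ Set.ncard {k : ℕ | w k ≠ k} = 2 * a}


open Finset


def cnt (A : Finset ℕ) (m : ℕ) : ℕ := (A.filter (fun x => x ≤ m)).card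

lemma cnt_mono (A : Finset ℕ) {m m' : ℕ} (h : m ≤ m') : cnt A m ≤ cnt A m' :=
  Finset.card_le_card (Finset.monotone_filter_right _ (fun x _ hx => le_trans hx h))

lemma cnt_le_card (A : Finset ℕ) (m : ℕ) : cnt A m ≤ A.card :=
  Finset.card_le_card (Finset.filter_subset _ _)

lemma cnt_eq_card {A : Finset ℕ} {n m : ℕ} (hA : A ⊆ Finset.Icc 1 n) (h : n ≤ m) :
    cnt A m = A.card := by
  unfold cnt
  rw [Finset.filter_true_of_mem]
  intro x hx
  have := hA hx
  simp only [Finset.mem_Icc] at this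
  omega

lemma cnt_succ (A : Finset ℕ) {k : ℕ} (hk : 1 ≤ k) :
    cnt A k = cnt A (k - 1) + (if k ∈ A then 1 else 0) := by
  unfold cnt
  have hsplit : A.filter (fun x => x ≤ k) =
      A.filter (fun x => x ≤ k - 1) ∪ A.filter (fun x => x = k) := by
    rw [← Finset.filter_or]
    apply Finset.filter_congr
    intro x _
    constructor
    · intro h; omega
    · intro h; omega
  rw [hsplit, Finset.card_union_of_disjoint]
  · congr 1
    rw [Finset.filter_eq']
    split <;> simp
  · rw [Finset.disjoint_left]
    intro x hx hx'
    simp only [Finset.mem_filter] at hx hx'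
    omega

lemma exists_emb {s : Finset ℕ} {c : ℕ} (hs : s.card = c) {k : ℕ} (hk : k ∈ s) :
    ∃ i, s.orderEmbOfFin hs i = k := by
  have : k ∈ Set.range (s.orderEmbOfFin hs) := by
    rw [Finset.range_orderEmbOfFin]; exact hk
  exact this

lemma cnt_emb (s : Finset ℕ) {c : ℕ} (hs : s.card = c) (i : Fin c) :
    cnt s (s.orderEmbOfFin hs i) = i + 1 := by
  unfold cnt
  have himg : s.filter (fun x => x ≤ s.orderEmbOfFin hs i) =
      (Finset.Iic i).image (s.orderEmbOfFin hs) := by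
    ext x
    simp only [Finset.mem_filter, Finset.mem_image, Finset.mem_Iic]
    constructor
    · rintro ⟨hxs, hxle⟩
      obtain ⟨j, rfl⟩ := exists_emb hs hxs
      exact ⟨j, (s.orderEmbOfFin hs).le_iff_le.mp hxle, rfl⟩
    · rintro ⟨j, hj, rfl⟩
      exact ⟨Finset.orderEmbOfFin_mem _ _ _, (s.orderEmbOfFin hs).le_iff_le.mpr hj⟩
  rw [himg, Finset.card_image_of_injective _ (s.orderEmbOfFin hs).injective, Fin.card_Iic]

lemma cnt_lt_emb (s : Finset ℕ) {c : ℕ} (hs : s.card = c) (i : Fin c) {x : ℕ}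
    (hx : x < s.orderEmbOfFin hs i) : cnt s x ≤ i := by
  have hsub : s.filter (fun y => y ≤ x) ⊆ (Finset.Iio i).image (s.orderEmbOfFin hs) := by
    intro y hy
    simp only [Finset.mem_filter] at hy
    obtain ⟨j, rfl⟩ := exists_emb hs hy.1
    simp only [Finset.mem_image, Finset.mem_Iio]
    exact ⟨j, (s.orderEmbOfFin hs).lt_iff_lt.mp (lt_of_le_of_lt hy.2 hx), rfl⟩
  calc cnt s x ≤ ((Finset.Iio i).image (s.orderEmbOfFin hs)).card := Finset.card_le_card hsub
    _ = (Finset.Iio i).card := Finset.card_image_of_injective _ (s.orderEmbOfFin hs).injective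
    _ = i := Fin.card_Iio i

lemma cnt_emb_le (s : Finset ℕ) {c : ℕ} (hs : s.card = c) (i : Fin c) {x : ℕ}
    (hx : s.orderEmbOfFin hs i ≤ x) : (i : ℕ) + 1 ≤ cnt s x :=
  (cnt_emb s hs i) ▸ cnt_mono s hx

section basics
variable {n : ℕ} {w : Equiv.Perm ℕ}

lemma invol_apply (h : IsInvolutionOn n w) (k : ℕ) : w (w k) = k := by
  have := congrArg (fun σ : Equiv.Perm ℕ => σ k) h.2
  simpa [Equiv.Perm.mul_apply] using this

lemma mem_of_ne (h : IsInvolutionOn n w) {k : ℕ} (hk : w k ≠ k) : 1 ≤ k ∧ k ≤ n := h.1 k hk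

lemma apply_mem_of_ne (h : IsInvolutionOn n w) {k : ℕ} (hk : w k ≠ k) :
    1 ≤ w k ∧ w k ≤ n := by
  refine h.1 (w k) ?_
  rw [invol_apply h]
  exact fun hc => hk hc.symm

def Qof (n : ℕ) (w : Equiv.Perm ℕ) : Finset ℕ := (Finset.Icc 1 n).filter (fun k => w k < k)
def Pof (n : ℕ) (w : Equiv.Perm ℕ) : Finset ℕ := (Finset.Icc 1 n).filter (fun k => k < w k)

lemma mem_Qof {k : ℕ} : k ∈ Qof n w ↔ (1 ≤ k ∧ k ≤ n) ∧ w k < k := by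
  simp [Qof, Finset.mem_filter, Finset.mem_Icc]

lemma mem_Pof {k : ℕ} : k ∈ Pof n w ↔ (1 ≤ k ∧ k ≤ n) ∧ k < w k := by
  simp [Pof, Finset.mem_filter, Finset.mem_Icc]

lemma mem_Qof_of_mem_Pof (h : IsInvolutionOn n w) {k : ℕ} (hk : k ∈ Pof n w) :
    w k ∈ Qof n w := by
  rw [mem_Pof] at hk
  rw [mem_Qof, invol_apply h]
  exact ⟨apply_mem_of_ne h (by omega), hk.2⟩

lemma mem_Pof_of_mem_Qof (h : IsInvolutionOn n w) {k : ℕ} (hk : k ∈ Qof n w) :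
    w k ∈ Pof n w := by
  rw [mem_Qof] at hk
  rw [mem_Pof, invol_apply h]
  exact ⟨apply_mem_of_ne h (by omega), hk.2⟩

lemma disjoint_Pof_Qof : Disjoint (Pof n w) (Qof n w) := by
  rw [Finset.disjoint_left]
  intro k hk hk'
  rw [mem_Pof] at hk; rw [mem_Qof] at hk'
  omega

lemma card_Pof_eq (h : IsInvolutionOn n w) : (Pof n w).card = (Qof n w).card := by
  apply le_antisymm
  · exact Finset.card_le_card_of_injOn (fun k => w k)
      (fun k hk => mem_Qof_of_mem_Pof h hk) (fun a _ b _ hab => w.injective hab)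
  · exact Finset.card_le_card_of_injOn (fun k => w k)
      (fun k hk => mem_Pof_of_mem_Qof h hk) (fun a _ b _ hab => w.injective hab)

lemma support_eq (h : IsInvolutionOn n w) :
    {k : ℕ | w k ≠ k} = ↑(Pof n w ∪ Qof n w) := by
  ext k
  simp only [Set.mem_setOf_eq, Finset.coe_union, Set.mem_union, Finset.mem_coe,
    mem_Pof, mem_Qof]
  constructor
  · intro hk
    have := mem_of_ne h hk
    rcases lt_trichotomy (w k) k with h1 | h1 | h1
    · right; exact ⟨this, h1⟩
    · omega
    · left; exact ⟨this, h1⟩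
  · intro hk
    rcases hk with ⟨_, h1⟩ | ⟨_, h1⟩ <;> omega

lemma ncard_support (h : IsInvolutionOn n w) :
    Set.ncard {k : ℕ | w k ≠ k} = 2 * (Qof n w).card := by
  rw [support_eq h, Set.ncard_coe_finset,
    Finset.card_union_of_disjoint disjoint_Pof_Qof, card_Pof_eq h]
  omega

lemma noFixInside (h : IsInvolutionOn n w) (hav : Avoids321 n w) {k f : ℕ}
    (hkf : k < f) (hfw : f < w k) (hf : w f = f) : False := by
  have hk1 : 1 ≤ k := (mem_of_ne h (by omega)).1
  have hwkn : w k ≤ n := (apply_mem_of_ne h (show w k ≠ k by omega)).2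
  exact hav k f (w k) hk1 hkf hfw hwkn ⟨by omega, by rw [invol_apply h]; omega⟩

lemma incP (h : IsInvolutionOn n w) (hav : Avoids321 n w) {k k' : ℕ}
    (hkk' : k < k') (h1 : k < w k) (h2 : k' < w k') : w k < w k' := by
  by_contra hle
  push_neg at hle
  have hne : w k' ≠ w k := fun hc => by
    have := w.injective hc; omega
  have hlt : w k' < w k := by omega
  have hk1 : 1 ≤ k := (mem_of_ne h (by omega)).1
  have hwk'n : w k' ≤ n := (apply_mem_of_ne h (show w k' ≠ k' by omega)).2
  exact hav k k' (w k') hk1 hkk' h2 hwk'n ⟨hlt, by rw [invol_apply h]; omega⟩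

lemma incQ (h : IsInvolutionOn n w) (hav : Avoids321 n w) {q q' : ℕ}
    (hqq' : q < q') (h1 : w q < q) (h2 : w q' < q') : w q < w q' := by
  by_contra hle
  push_neg at hle
  have hne : w q' ≠ w q := fun hc => by
    have := w.injective hc; omega
  have hlt : w q' < w q := by omega
  have := incP h hav hlt (by rw [invol_apply h]; omega) (by rw [invol_apply h]; omega)
  rw [invol_apply h, invol_apply h] at this
  omega

lemma avoids_of (h : IsInvolutionOn n w)
    (hP : ∀ k k', k < k' → k < w k → k' < w k' → w k < w k')
    (hF : ∀ k f, k < f → f < w k → w f ≠ f) : Avoids321 n w := by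
  have hQ : ∀ x y, x < y → w x < x → w y < y → w x < w y := by
    intro x y hxy hx hy
    by_contra hle
    push_neg at hle
    have hne : w y ≠ w x := fun hc => by have := w.injective hc; omega
    have hlt : w y < w x := by omega
    have := hP (w y) (w x) hlt (by rw [invol_apply h]; omega) (by rw [invol_apply h]; omega)
    rw [invol_apply h, invol_apply h] at this
    omega
  rintro p q r hp hpq hqr hrn ⟨h1, h2⟩
  rcases lt_trichotomy q (w q) with hq | hq | hq
  · rcases lt_trichotomy p (w p) with hp' | hp' | hp'
    · have := hP p q hpq hp' hq; omega
    · omega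
    · omega
  · rcases lt_trichotomy r (w r) with hr | hr | hr
    · omega
    · omega
    · exact hF (w r) q (by omega) (by rw [invol_apply h]; omega) (by omega)
  · rcases lt_trichotomy p (w p) with hp' | hp' | hp'
    · rcases lt_trichotomy r (w r) with hr | hr | hr
      · omega
      · omega
      · have := hQ q r hqr hq hr; omega
    · exact hF (w q) p (by omega) (by rw [invol_apply h]; omega) (by omega)
    · have := hQ p q hpq hp' hq; omega
end basics


def PairCond (n : ℕ) (P Q : Finset ℕ) : Prop :=
  P ⊆ Finset.Icc 1 n ∧ Q ⊆ Finset.Icc 1 n ∧ Disjoint P Q ∧ P.card = Q.card ∧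
  (∀ m, cnt Q m ≤ cnt P m) ∧
  (∀ k, k ∈ Finset.Icc 1 n → k ∉ P → k ∉ Q → cnt P k = cnt Q k)

section forward
variable {n : ℕ} {w : Equiv.Perm ℕ}

lemma pairCond_of (h : IsInvolutionOn n w) (hav : Avoids321 n w) :
    PairCond n (Pof n w) (Qof n w) := by
  refine ⟨Finset.filter_subset _ _, Finset.filter_subset _ _, disjoint_Pof_Qof,
    card_Pof_eq h, ?_, ?_⟩
  · intro m
    apply Finset.card_le_card_of_injOn (fun k => w k)
    · intro q hq
      simp only [Finset.mem_coe, Finset.mem_filter] at hq ⊢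
      refine ⟨mem_Pof_of_mem_Qof h hq.1, ?_⟩
      have := (mem_Qof (n := n) (w := w)).mp hq.1
      omega
    · exact fun a _ b _ hab => w.injective hab
  · intro k hk hkP hkQ
    simp only [Finset.mem_Icc] at hk
    have hfix : w k = k := by
      by_contra hne
      rcases lt_trichotomy (w k) k with h1 | h1 | h1
      · exact hkQ (mem_Qof.mpr ⟨hk, h1⟩)
      · exact hne h1
      · exact hkP (mem_Pof.mpr ⟨hk, h1⟩)
    apply le_antisymm
    · apply Finset.card_le_card_of_injOn (fun p => w p)
      · intro p hp
        simp only [Finset.mem_coe, Finset.mem_filter] at hp ⊢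
        refine ⟨mem_Qof_of_mem_Pof h hp.1, ?_⟩
        have hp' := (mem_Pof (n := n) (w := w)).mp hp.1
        -- w p ≤ k
        by_contra hgt
        push_neg at hgt
        have hpk : p ≠ k := fun hc => by rw [hc] at hp'; omega
        exact noFixInside h hav (show p < k by omega) (by omega) hfix
      · exact fun a _ b _ hab => w.injective hab
    · apply Finset.card_le_card_of_injOn (fun q => w q)
      · intro q hq
        simp only [Finset.mem_coe, Finset.mem_filter] at hq ⊢
        refine ⟨mem_Pof_of_mem_Qof h hq.1, ?_⟩
        have := (mem_Qof (n := n) (w := w)).mp hq.1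
        omega
      · exact fun a _ b _ hab => w.injective hab
end forward

section unique

lemma pairCond_aux {n : ℕ} {P1 P2 Q : Finset ℕ} (h1 : PairCond n P1 Q)
    (h2 : PairCond n P2 Q) {k : ℕ} (hk : k ∈ P1) (hk2 : k ∉ P2)
    (hmax : ∀ x, k < x → (x ∈ P1 ↔ x ∈ P2)) : False := by
  obtain ⟨hP1n, hQn, hd1, hc1, hi1, hii1⟩ := h1
  obtain ⟨hP2n, -, hd2, hc2, hi2, hii2⟩ := h2
  have hsplit : ∀ P : Finset ℕ, cnt P k + (P.filter (fun x => ¬ x ≤ k)).card = P.card :=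
    fun P => Finset.card_filter_add_card_filter_not _
  have habove : P1.filter (fun x => ¬ x ≤ k) = P2.filter (fun x => ¬ x ≤ k) := by
    ext x
    simp only [Finset.mem_filter, not_le]
    constructor
    · rintro ⟨hx1, hx2⟩; exact ⟨(hmax x hx2).mp hx1, hx2⟩
    · rintro ⟨hx1, hx2⟩; exact ⟨(hmax x hx2).mpr hx1, hx2⟩
  have hcnt12 : cnt P1 k = cnt P2 k := by
    have e1 := hsplit P1
    have e2 := hsplit P2
    rw [habove] at e1
    omega
  have hkIcc : k ∈ Finset.Icc 1 n := hP1n hk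
  have hk1 : 1 ≤ k := by simp only [Finset.mem_Icc] at hkIcc; exact hkIcc.1
  have hkQ : k ∉ Q := Finset.disjoint_left.mp hd1 hk
  have e3 : cnt P2 k = cnt Q k := hii2 k hkIcc hk2 hkQ
  have e4 : cnt Q k = cnt Q (k - 1) := by rw [cnt_succ Q hk1, if_neg hkQ]; omega
  have e5 : cnt P1 k = cnt P1 (k - 1) + 1 := by rw [cnt_succ P1 hk1, if_pos hk]
  have e6 := hi1 (k - 1)
  omega

lemma pairCond_unique {n : ℕ} {P1 P2 Q : Finset ℕ} (h1 : PairCond n P1 Q)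
    (h2 : PairCond n P2 Q) : P1 = P2 := by
  by_contra hne
  have hD : ((P1 \ P2) ∪ (P2 \ P1)).Nonempty := by
    rw [Finset.nonempty_iff_ne_empty]
    intro hc
    apply hne
    rw [Finset.union_eq_empty, Finset.sdiff_eq_empty_iff_subset,
      Finset.sdiff_eq_empty_iff_subset] at hc
    exact le_antisymm hc.1 hc.2
  set k := ((P1 \ P2) ∪ (P2 \ P1)).max' hD with hkdef
  have hkmem := Finset.max'_mem _ hD
  have hmax : ∀ x, k < x → (x ∈ P1 ↔ x ∈ P2) := by
    intro x hx
    by_contra hc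
    have hxmem : x ∈ (P1 \ P2) ∪ (P2 \ P1) := by
      simp only [Finset.mem_union, Finset.mem_sdiff]
      by_cases hx1 : x ∈ P1
      · left; exact ⟨hx1, fun hx2 => hc ⟨fun _ => hx2, fun _ => hx1⟩⟩
      · right
        refine ⟨?_, hx1⟩
        by_contra hx2
        exact hc ⟨fun h => absurd h hx1, fun h => absurd h hx2⟩
    have := Finset.le_max' _ x hxmem
    omega
  simp only [Finset.mem_union, Finset.mem_sdiff] at hkmem
  rcases hkmem with ⟨hk1, hk2⟩ | ⟨hk1, hk2⟩
  · exact pairCond_aux h1 h2 hk1 hk2 hmax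
  · exact pairCond_aux h2 h1 hk1 hk2 (fun x hx => (hmax x hx).symm)

end unique

lemma exists_pairCond : ∀ (n : ℕ) (Q : Finset ℕ), Q ⊆ Finset.Icc 1 n →
    (∀ m, 2 * cnt Q m ≤ m) → ∃ P, PairCond n P Q := by
  intro n
  induction n with
  | zero =>
    intro Q hQ _
    have hQe : Q = ∅ := by
      rw [← Finset.subset_empty]
      simpa using hQ
    subst hQe
    exact ⟨∅, by simp, by simp, by simp, rfl, fun m => le_refl _, by simp⟩
  | succ n ih =>
    intro Q hQ hbal
    by_cases hmem : (n + 1) ∈ Q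
    · set Q' := Q.erase (n + 1) with hQ'def
      have hQ'sub : Q' ⊆ Finset.Icc 1 n := by
        intro x hx
        simp only [hQ'def, Finset.mem_erase] at hx
        have := hQ hx.2
        simp only [Finset.mem_Icc] at this ⊢
        omega
      have hcntQ' : ∀ m, m ≤ n → cnt Q' m = cnt Q m := by
        intro m hm
        unfold cnt
        congr 1
        ext x
        simp only [hQ'def, Finset.mem_filter, Finset.mem_erase]
        constructor
        · rintro ⟨⟨_, hx⟩, hxm⟩; exact ⟨hx, hxm⟩
        · rintro ⟨hx, hxm⟩; exact ⟨⟨by omega, hx⟩, hxm⟩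
      have hbal' : ∀ m, 2 * cnt Q' m ≤ m := by
        intro m
        refine le_trans ?_ (hbal m)
        have : cnt Q' m ≤ cnt Q m :=
          Finset.card_le_card (Finset.filter_subset_filter _ (Finset.erase_subset _ _))
        omega
      obtain ⟨P', hP'⟩ := ih Q' hQ'sub hbal'
      obtain ⟨hP'n, -, hd', hc', hi', hii'⟩ := hP'
      have hcardQ : 1 ≤ Q.card := Finset.card_pos.mpr ⟨_, hmem⟩
      have hcardQ' : Q'.card = Q.card - 1 := Finset.card_erase_of_mem hmem
      have h2a : 2 * Q.card ≤ n + 1 := by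
        have := hbal (n + 1)
        rwa [cnt_eq_card hQ (le_refl _)] at this
      -- the new left endpoint
      have hR : ((Finset.Icc 1 n) \ (P' ∪ Q')).Nonempty := by
        rw [← Finset.card_pos]
        have hsub : P' ∪ Q' ⊆ Finset.Icc 1 n := Finset.union_subset hP'n hQ'sub
        have hcard := Finset.card_le_card hsub
        have hle : (P' ∪ Q').card ≤ P'.card + Q'.card := Finset.card_union_le _ _
        have hIcc : (Finset.Icc 1 n).card = n := by rw [Nat.card_Icc]; omega
        have : ((Finset.Icc 1 n) \ (P' ∪ Q')).card = n - (P' ∪ Q').card := by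
          rw [Finset.card_sdiff_of_subset hsub, hIcc]
        omega
      set x := ((Finset.Icc 1 n) \ (P' ∪ Q')).max' hR with hxdef
      have hxmem : x ∈ (Finset.Icc 1 n) \ (P' ∪ Q') := Finset.max'_mem _ hR
      have hxmax : ∀ y ∈ (Finset.Icc 1 n) \ (P' ∪ Q'), y ≤ x := fun y hy => Finset.le_max' _ y hy
      clear_value x
      simp only [Finset.mem_sdiff, Finset.mem_union, Finset.mem_Icc, not_or] at hxmem
      obtain ⟨⟨hx1, hxn⟩, hxP', hxQ'⟩ := hxmem
      have hxQ : x ∉ Q := by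
        intro hc
        exact hxQ' (by simp only [hQ'def, Finset.mem_erase]; exact ⟨by omega, hc⟩)
      refine ⟨insert x P', ?_, hQ, ?_, ?_, ?_, ?_⟩
      · -- subset
        intro y hy
        rcases Finset.mem_insert.mp hy with rfl | hy
        · simp only [Finset.mem_Icc]; omega
        · have := hP'n hy; simp only [Finset.mem_Icc] at this ⊢; omega
      · -- disjoint
        rw [Finset.disjoint_left]
        intro y hy hyQ
        rcases Finset.mem_insert.mp hy with rfl | hy
        · exact hxQ hyQ
        · have hyn : y ≤ n := by
            have := hP'n hy; simp only [Finset.mem_Icc] at this; omega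
          have : y ∈ Q' := by
            simp only [hQ'def, Finset.mem_erase]; exact ⟨by omega, hyQ⟩
          exact Finset.disjoint_left.mp hd' hy this
      · -- cards
        rw [Finset.card_insert_of_notMem hxP', hc', hcardQ']
        omega
      · -- (i)
        intro m
        have hcntP : cnt (insert x P') m = cnt P' m + (if x ≤ m then 1 else 0) := by
          unfold cnt
          rw [Finset.filter_insert]
          split
          · rw [Finset.card_insert_of_notMem (fun hc => hxP' (Finset.mem_of_mem_filter _ hc))]
          · omega
        have hcntQm : cnt Q m ≤ cnt Q' m + 1 := by
          unfold cnt
          have : Q.filter (fun y => y ≤ m) ⊆ insert (n+1) (Q'.filter (fun y => y ≤ m)) := by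
            intro y hy
            simp only [Finset.mem_filter] at hy
            rcases eq_or_ne y (n+1) with rfl | hne
            · exact Finset.mem_insert_self _ _
            · refine Finset.mem_insert_of_mem ?_
              simp only [hQ'def, Finset.mem_filter, Finset.mem_erase]
              exact ⟨⟨hne, hy.1⟩, hy.2⟩
          calc (Q.filter (fun y => y ≤ m)).card ≤ _ := Finset.card_le_card this
            _ ≤ (Q'.filter (fun y => y ≤ m)).card + 1 := Finset.card_insert_le _ _
        by_cases hxm : x ≤ m
        · have := hi' m
          rw [hcntP, if_pos hxm]
          omega
        · -- m < x ≤ n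
          have hmn : m ≤ n := by omega
          rw [hcntP, if_neg hxm, ← hcntQ' m hmn]
          simpa using hi' m
      · -- (ii)
        intro k hk hkP hkQ
        simp only [Finset.mem_Icc] at hk
        have hkn1 : k ≠ n + 1 := fun hc => hkQ (hc ▸ hmem)
        have hkn : k ≤ n := by omega
        have hkx : k ≠ x := fun hc => hkP (hc ▸ Finset.mem_insert_self _ _)
        have hkP' : k ∉ P' := fun hc => hkP (Finset.mem_insert_of_mem hc)
        have hkQ'' : k ∉ Q' := fun hc => hkQ (Finset.mem_of_mem_erase hc)
        have hklt : k < x := by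
          by_contra hge
          push_neg at hge
          have hkmem : k ∈ (Finset.Icc 1 n) \ (P' ∪ Q') := by
            simp only [Finset.mem_sdiff, Finset.mem_union, Finset.mem_Icc, not_or]
            exact ⟨⟨hk.1, hkn⟩, hkP', hkQ''⟩
          have := hxmax k hkmem
          omega
        have hcntP : cnt (insert x P') k = cnt P' k := by
          unfold cnt
          rw [Finset.filter_insert, if_neg (by omega)]
        rw [hcntP, ← hcntQ' k hkn]
        exact hii' k (by simp only [Finset.mem_Icc]; omega) hkP' hkQ''
    · -- n+1 ∉ Q
      have hQsub : Q ⊆ Finset.Icc 1 n := by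
        intro y hy
        have := hQ hy
        simp only [Finset.mem_Icc] at this ⊢
        have : y ≠ n + 1 := fun hc => hmem (hc ▸ hy)
        omega
      obtain ⟨P, hP⟩ := ih Q hQsub hbal
      obtain ⟨hPn, hQn, hd, hc, hi, hii⟩ := hP
      refine ⟨P, fun y hy => ?_, fun y hy => ?_, hd, hc, hi, ?_⟩
      · have := hPn hy; simp only [Finset.mem_Icc] at this ⊢; omega
      · have := hQn hy; simp only [Finset.mem_Icc] at this ⊢; omega
      · intro k hk hkP hkQ
        simp only [Finset.mem_Icc] at hk
        by_cases hkn : k ≤ n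
        · exact hii k (by simp only [Finset.mem_Icc]; omega) hkP hkQ
        · have hk1 : k = n + 1 := by omega
          subst hk1
          rw [cnt_eq_card hPn (by omega), cnt_eq_card hQn (by omega), hc]

section build
variable (P Q : Finset ℕ)

noncomputable def bf (hc : Q.card = P.card) : ℕ → ℕ := fun k =>
  if h : k ∈ P then Q.orderEmbOfFin hc ((P.orderIsoOfFin rfl).symm ⟨k, h⟩)
  else if h : k ∈ Q then P.orderEmbOfFin rfl ((Q.orderIsoOfFin hc).symm ⟨k, h⟩)
  else k

variable {P Q}

lemma bf_apply_P (hc : Q.card = P.card) (i : Fin P.card) :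
    bf P Q hc (P.orderEmbOfFin rfl i) = Q.orderEmbOfFin hc i := by
  unfold bf
  rw [dif_pos (Finset.orderEmbOfFin_mem P rfl i)]
  congr 1
  have h1 : (⟨P.orderEmbOfFin rfl i, Finset.orderEmbOfFin_mem P rfl i⟩ : {y // y ∈ P}) =
      P.orderIsoOfFin rfl i := Subtype.ext (Finset.coe_orderIsoOfFin_apply P rfl i).symm
  rw [h1, OrderIso.symm_apply_apply]

lemma bf_apply_Q (hc : Q.card = P.card) (hd : Disjoint P Q) (i : Fin P.card) :
    bf P Q hc (Q.orderEmbOfFin hc i) = P.orderEmbOfFin rfl i := by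
  have hmemQ : Q.orderEmbOfFin hc i ∈ Q := Finset.orderEmbOfFin_mem Q hc i
  have hnP : Q.orderEmbOfFin hc i ∉ P := fun h => Finset.disjoint_left.mp hd h hmemQ
  unfold bf
  rw [dif_neg hnP, dif_pos hmemQ]
  congr 1
  have h1 : (⟨Q.orderEmbOfFin hc i, hmemQ⟩ : {y // y ∈ Q}) =
      Q.orderIsoOfFin hc i := Subtype.ext (Finset.coe_orderIsoOfFin_apply Q hc i).symm
  rw [h1, OrderIso.symm_apply_apply]

lemma bf_apply_nmem (hc : Q.card = P.card) {k : ℕ} (h1 : k ∉ P) (h2 : k ∉ Q) :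
    bf P Q hc k = k := by
  unfold bf
  rw [dif_neg h1, dif_neg h2]

lemma bf_invol (hc : Q.card = P.card) (hd : Disjoint P Q) :
    ∀ k, bf P Q hc (bf P Q hc k) = k := by
  intro k
  by_cases h : k ∈ P
  · obtain ⟨i, rfl⟩ := exists_emb (rfl : P.card = P.card) h
    rw [bf_apply_P, bf_apply_Q hc hd]
  · by_cases h2 : k ∈ Q
    · obtain ⟨i, rfl⟩ := exists_emb hc h2
      rw [bf_apply_Q hc hd, bf_apply_P]
    · rw [bf_apply_nmem hc h h2, bf_apply_nmem hc h h2]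

noncomputable def bw (hc : Q.card = P.card) (hd : Disjoint P Q) : Equiv.Perm ℕ :=
  ⟨bf P Q hc, bf P Q hc, bf_invol hc hd, bf_invol hc hd⟩

lemma bw_apply (hc : Q.card = P.card) (hd : Disjoint P Q) (k : ℕ) :
    bw hc hd k = bf P Q hc k := rfl

end build

lemma construct {n : ℕ} {P Q : Finset ℕ} (hPQ : PairCond n P Q) :
    ∃ w : Equiv.Perm ℕ, IsInvolutionOn n w ∧ Avoids321 n w ∧ Qof n w = Q := by
  obtain ⟨hPn, hQn, hd, hcard, hi, hii⟩ := hPQ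
  have hc : Q.card = P.card := hcard.symm
  set w := bw hc hd with hwdef
  -- p_i < q_i
  have hpq : ∀ i : Fin P.card, P.orderEmbOfFin rfl i < Q.orderEmbOfFin hc i := by
    intro i
    have hne : P.orderEmbOfFin rfl i ≠ Q.orderEmbOfFin hc i := by
      intro hcne
      exact Finset.disjoint_left.mp hd (Finset.orderEmbOfFin_mem P rfl i)
        (hcne ▸ Finset.orderEmbOfFin_mem Q hc i)
    by_contra hle
    push_neg at hle
    have hlt : Q.orderEmbOfFin hc i < P.orderEmbOfFin rfl i := by
      rcases lt_or_eq_of_le hle with h | h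
      · exact h
      · exact absurd h.symm hne
    have h1 : cnt P (Q.orderEmbOfFin hc i) ≤ i := cnt_lt_emb P rfl i hlt
    have h2 : (i : ℕ) + 1 ≤ cnt Q (Q.orderEmbOfFin hc i) := cnt_emb_le Q hc i (le_refl _)
    have := hi (Q.orderEmbOfFin hc i)
    omega
  have hwP : ∀ i : Fin P.card, w (P.orderEmbOfFin rfl i) = Q.orderEmbOfFin hc i :=
    fun i => bf_apply_P hc i
  have hwQ : ∀ i : Fin P.card, w (Q.orderEmbOfFin hc i) = P.orderEmbOfFin rfl i :=
    fun i => bf_apply_Q hc hd i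
  have hwfix : ∀ k, k ∉ P → k ∉ Q → w k = k := fun k h1 h2 => bf_apply_nmem hc h1 h2
  have hfixiff : ∀ k, w k ≠ k → k ∈ P ∪ Q := by
    intro k hk
    by_contra hcon
    simp only [Finset.mem_union, not_or] at hcon
    exact hk (hwfix k hcon.1 hcon.2)
  have hinv : IsInvolutionOn n w := by
    constructor
    · intro k hk
      have := hfixiff k hk
      rcases Finset.mem_union.mp this with h | h
      · have := hPn h; simp only [Finset.mem_Icc] at this; exact this
      · have := hQn h; simp only [Finset.mem_Icc] at this; exact this
    · apply Equiv.ext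
      intro k
      rw [Equiv.Perm.mul_apply, Equiv.Perm.one_apply]
      exact bf_invol hc hd k
  -- membership characterizations
  have hmemP : ∀ {k}, k ∈ P → k < w k := by
    intro k hk
    obtain ⟨i, rfl⟩ := exists_emb (rfl : P.card = P.card) hk
    rw [hwP]
    exact hpq i
  have hmemQ : ∀ {k}, k ∈ Q → w k < k := by
    intro k hk
    obtain ⟨i, rfl⟩ := exists_emb hc hk
    rw [hwQ]
    exact hpq i
  have hPchar : ∀ {k}, k < w k → k ∈ P := by
    intro k hk
    rcases Finset.mem_union.mp (hfixiff k (by omega)) with h | h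
    · exact h
    · have := hmemQ h; omega
  -- noFix
  have hnoFix : ∀ k f, k < f → f < w k → w f ≠ f := by
    intro k f hkf hfwk hf
    have hkP : k ∈ P := hPchar (by omega)
    obtain ⟨i, rfl⟩ := exists_emb (rfl : P.card = P.card) hkP
    rw [hwP] at hfwk
    have hfP : f ∉ P := by
      intro hc2
      have := hmemP hc2; omega
    have hfQ : f ∉ Q := by
      intro hc2
      have := hmemQ hc2; omega
    have hfIcc : f ∈ Finset.Icc 1 n := by
      have h1 := hPn (Finset.orderEmbOfFin_mem P rfl i)
      have h2 := hQn (Finset.orderEmbOfFin_mem Q hc i)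
      simp only [Finset.mem_Icc] at h1 h2 ⊢
      omega
    have heq := hii f hfIcc hfP hfQ
    have h1 : (i : ℕ) + 1 ≤ cnt P f := cnt_emb_le P rfl i (by omega)
    have h2 : cnt Q f ≤ i := cnt_lt_emb Q hc i hfwk
    omega
  -- incP
  have hincP : ∀ k k', k < k' → k < w k → k' < w k' → w k < w k' := by
    intro k k' hkk' h1 h2
    have hk : k ∈ P := hPchar h1
    have hk' : k' ∈ P := hPchar h2
    obtain ⟨i, rfl⟩ := exists_emb (rfl : P.card = P.card) hk
    obtain ⟨j, rfl⟩ := exists_emb (rfl : P.card = P.card) hk'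
    rw [hwP, hwP]
    exact (Q.orderEmbOfFin hc).lt_iff_lt.mpr ((P.orderEmbOfFin rfl).lt_iff_lt.mp hkk')
  refine ⟨w, hinv, avoids_of hinv hincP hnoFix, ?_⟩
  ext k
  rw [mem_Qof]
  constructor
  · rintro ⟨hkIcc, hklt⟩
    rcases Finset.mem_union.mp (hfixiff k (by omega)) with h | h
    · have := hmemP h; omega
    · exact h
  · intro hk
    have h1 := hmemQ hk
    have h2 := hQn hk
    simp only [Finset.mem_Icc] at h2
    exact ⟨h2, h1⟩

lemma determined {n : ℕ} {w w' : Equiv.Perm ℕ} (h : IsInvolutionOn n w)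
    (hav : Avoids321 n w) (h' : IsInvolutionOn n w') (hav' : Avoids321 n w')
    (hQ : Qof n w = Qof n w') : w = w' := by
  have hpc := pairCond_of h hav
  have hpc' := pairCond_of h' hav'
  rw [← hQ] at hpc'
  have hP : Pof n w = Pof n w' := pairCond_unique hpc hpc'
  set P := Pof n w with hPdef
  set Q := Qof n w with hQdef
  have hc : Q.card = P.card := hpc.2.2.2.1.symm
  have agree : ∀ k ∈ P, w k = w' k := by
    have hu1 : (fun i : Fin P.card => w (P.orderEmbOfFin rfl i)) = Q.orderEmbOfFin hc := by
      apply Finset.orderEmbOfFin_unique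
      · intro i
        exact mem_Qof_of_mem_Pof h (Finset.orderEmbOfFin_mem P rfl i)
      · intro i j hij
        have h1 := mem_Pof.mp (Finset.orderEmbOfFin_mem P rfl i)
        have h2 := mem_Pof.mp (Finset.orderEmbOfFin_mem P rfl j)
        exact incP h hav ((P.orderEmbOfFin rfl).lt_iff_lt.mpr hij) h1.2 h2.2
    have hu2 : (fun i : Fin P.card => w' (P.orderEmbOfFin rfl i)) = Q.orderEmbOfFin hc := by
      have hmem' : ∀ i : Fin P.card, P.orderEmbOfFin rfl i ∈ Pof n w' := by
        intro i
        rw [← hP]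
        exact Finset.orderEmbOfFin_mem P rfl i
      apply Finset.orderEmbOfFin_unique
      · intro i
        have := mem_Qof_of_mem_Pof h' (hmem' i)
        rwa [← hQ] at this
      · intro i j hij
        have h1 := mem_Pof.mp (hmem' i)
        have h2 := mem_Pof.mp (hmem' j)
        exact incP h' hav' ((P.orderEmbOfFin rfl).lt_iff_lt.mpr hij) h1.2 h2.2
    intro k hk
    obtain ⟨i, rfl⟩ := exists_emb (rfl : P.card = P.card) hk
    calc w (P.orderEmbOfFin rfl i) = Q.orderEmbOfFin hc i := congrFun hu1 i
      _ = w' (P.orderEmbOfFin rfl i) := (congrFun hu2 i).symm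
  apply Equiv.ext
  intro k
  by_cases hkP : k ∈ P
  · exact agree k hkP
  by_cases hkQ : k ∈ Q
  · have hwk : w k ∈ P := mem_Pof_of_mem_Qof h hkQ
    have hw'k : w' k ∈ P := by
      have := mem_Pof_of_mem_Qof h' (hQ ▸ hkQ)
      rwa [← hP] at this
    have e1 : w (w' k) = w' (w' k) := agree _ hw'k
    rw [invol_apply h'] at e1
    have e2 : w (w k) = k := invol_apply h k
    exact w.injective (by rw [e2, e1])
  · have hwk : w k = k := by
      by_contra hne
      have hm := mem_of_ne h hne
      rcases lt_trichotomy (w k) k with h1 | h1 | h1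
      · exact hkQ (mem_Qof.mpr ⟨hm, h1⟩)
      · exact hne h1
      · exact hkP (mem_Pof.mpr ⟨hm, h1⟩)
    have hw'k : w' k = k := by
      by_contra hne
      have hm := mem_of_ne h' hne
      rcases lt_trichotomy (w' k) k with h1 | h1 | h1
      · exact hkQ (hQ ▸ mem_Qof.mpr ⟨hm, h1⟩)
      · exact hne h1
      · exact hkP (hP ▸ mem_Pof.mpr ⟨hm, h1⟩)
    rw [hwk, hw'k]

open Classical in
noncomputable def cset (n a : ℕ) : Finset (Finset ℕ) :=
  (Finset.Icc 1 n).powerset.filter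
    (fun Q => Q.card = a ∧ ∀ m ∈ Finset.Icc 1 n, 2 * cnt Q m ≤ m)

lemma mem_cset {n a : ℕ} {Q : Finset ℕ} :
    Q ∈ cset n a ↔ Q ⊆ Finset.Icc 1 n ∧ Q.card = a ∧ ∀ m ∈ Finset.Icc 1 n, 2 * cnt Q m ≤ m := by
  simp only [cset, Finset.mem_filter, Finset.mem_powerset]

lemma ballot_all {n : ℕ} {Q : Finset ℕ} (hQn : Q ⊆ Finset.Icc 1 n)
    (h : ∀ m ∈ Finset.Icc 1 n, 2 * cnt Q m ≤ m) : ∀ m, 2 * cnt Q m ≤ m := by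
  have hQcard : 2 * Q.card ≤ n := by
    rcases Nat.eq_zero_or_pos n with hn | hn
    · subst hn
      have : Q = ∅ := by rw [← Finset.subset_empty]; simpa using hQn
      simp [this]
    · have := h n (Finset.mem_Icc.mpr ⟨hn, le_refl _⟩)
      rwa [cnt_eq_card hQn (le_refl _)] at this
  intro m
  by_cases h0 : m = 0
  · subst h0
    have : cnt Q 0 = 0 := by
      unfold cnt
      rw [Finset.card_eq_zero, Finset.filter_eq_empty_iff]
      intro x hx
      have := hQn hx
      simp only [Finset.mem_Icc] at this
      omega
    omega
  by_cases hm : m ≤ n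
  · exact h m (Finset.mem_Icc.mpr ⟨by omega, hm⟩)
  · have := cnt_le_card Q m
    omega

lemma two_card_le {n : ℕ} {Q : Finset ℕ} (hQn : Q ⊆ Finset.Icc 1 n)
    (h : ∀ m ∈ Finset.Icc 1 n, 2 * cnt Q m ≤ m) : 2 * Q.card ≤ n := by
  rcases Nat.eq_zero_or_pos n with hn | hn
  · subst hn
    have : Q = ∅ := by rw [← Finset.subset_empty]; simpa using hQn
    simp [this]
  · have := h n (Finset.mem_Icc.mpr ⟨hn, le_refl _⟩)
    rwa [cnt_eq_card hQn (le_refl _)] at this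

-- choose monotonicity helpers
lemma choose_step {N i : ℕ} (h : 2 * i + 1 ≤ N) : N.choose i ≤ N.choose (i + 1) := by
  have key := Nat.choose_succ_right_eq N i
  have h1 : N.choose i * (i + 1) ≤ N.choose i * (N - i) :=
    Nat.mul_le_mul_left _ (by omega)
  rw [← key] at h1
  exact Nat.le_of_mul_le_mul_right h1 (by omega)

lemma choose_mono_left {N : ℕ} : ∀ {j k : ℕ}, j ≤ k → 2 * k ≤ N → N.choose j ≤ N.choose k := by
  intro j k
  induction k with
  | zero =>
    intro h _
    have : j = 0 := by omega
    subst this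
    exact le_refl _
  | succ k ih =>
    intro hjk h2k
    rcases Nat.lt_or_ge j (k + 1) with hlt | hge
    · exact le_trans (ih (by omega) (by omega)) (choose_step (by omega))
    · have : j = k + 1 := by omega
      subst this
      exact le_refl _

lemma choose_le_of {N j k : ℕ} (hjk : j ≤ k) (hsum : j + k ≤ N) :
    N.choose j ≤ N.choose k := by
  by_cases h2 : 2 * k ≤ N
  · exact choose_mono_left hjk h2
  · have hkN : k ≤ N := by omega
    calc N.choose j ≤ N.choose (N - k) := choose_mono_left (by omega) (by omega)
      _ = N.choose k := Nat.choose_symm hkN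

lemma choose_le_pred {N a : ℕ} (h1 : 1 ≤ a) (h2 : N < 2 * a) :
    N.choose a ≤ N.choose (a - 1) := by
  by_cases ha : a ≤ N
  · calc N.choose a = N.choose (N - a) := (Nat.choose_symm ha).symm
      _ ≤ N.choose (a - 1) := choose_le_of (by omega) (by omega)
  · have : N.choose a = 0 := Nat.choose_eq_zero_of_lt (by omega)
    omega

lemma cset_zero (n : ℕ) : cset n 0 = {∅} := by
  ext Q
  rw [mem_cset, Finset.mem_singleton]
  constructor
  · rintro ⟨-, hc, -⟩
    exact Finset.card_eq_zero.mp hc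
  · rintro rfl
    refine ⟨Finset.empty_subset _, Finset.card_empty, fun m _ => ?_⟩
    simp [cnt]

lemma card_cset : ∀ n a : ℕ, (cset n a).card = n.choose a - (if a = 0 then 0 else n.choose (a - 1)) := by
  intro n
  induction n with
  | zero =>
    intro a
    rcases Nat.eq_zero_or_pos a with rfl | ha
    · rw [cset_zero]
      simp
    · have hempty : cset 0 a = ∅ := by
        rw [Finset.eq_empty_iff_forall_notMem]
        intro Q hQ
        rw [mem_cset] at hQ
        obtain ⟨hsub, hcard, -⟩ := hQ
        have : Q = ∅ := by rw [← Finset.subset_empty]; simpa using hsub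
        rw [this] at hcard
        simp at hcard
        omega
      rw [hempty]
      have : Nat.choose 0 a = 0 := Nat.choose_eq_zero_of_lt (by omega)
      simp [this]
  | succ n ih =>
    intro a
    rcases Nat.eq_zero_or_pos a with rfl | ha
    · rw [cset_zero]; simp
    by_cases h2a : 2 * a ≤ n + 1
    · -- split by membership of n+1
      have hsplit := Finset.card_filter_add_card_filter_not
        (s := cset (n + 1) a) (p := fun Q => (n + 1) ∈ Q)
      have hA : (cset (n + 1) a).filter (fun Q => ¬ (n + 1) ∈ Q) = cset n a := by
        ext Q
        simp only [Finset.mem_filter, mem_cset]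
        constructor
        · rintro ⟨⟨hsub, hcard, hbal⟩, hnm⟩
          refine ⟨?_, hcard, ?_⟩
          · intro x hx
            have := hsub hx
            simp only [Finset.mem_Icc] at this ⊢
            have : x ≠ n + 1 := fun hc => hnm (hc ▸ hx)
            omega
          · intro m hm
            apply hbal
            simp only [Finset.mem_Icc] at hm ⊢
            omega
        · rintro ⟨hsub, hcard, hbal⟩
          have h2c := two_card_le hsub hbal
          have hsub' : Q ⊆ Finset.Icc 1 (n + 1) := by
            intro x hx
            have := hsub hx
            simp only [Finset.mem_Icc] at this ⊢
            omega
          have hnm : (n + 1) ∉ Q := by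
            intro hc
            have := hsub hc
            simp only [Finset.mem_Icc] at this
            omega
          refine ⟨⟨hsub', hcard, ?_⟩, hnm⟩
          intro m hm
          simp only [Finset.mem_Icc] at hm
          by_cases hmn : m ≤ n
          · exact hbal m (Finset.mem_Icc.mpr ⟨hm.1, hmn⟩)
          · have hm1 : m = n + 1 := by omega
            subst hm1
            rw [cnt_eq_card hsub (by omega)]
            omega
      have hB : ((cset (n + 1) a).filter (fun Q => (n + 1) ∈ Q)).card = (cset n (a - 1)).card := by
        apply Finset.card_bij (fun Q _ => Q.erase (n + 1))
        · intro Q hQ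
          simp only [Finset.mem_filter, mem_cset] at hQ
          obtain ⟨⟨hsub, hcard, hbal⟩, hmem⟩ := hQ
          rw [mem_cset]
          refine ⟨?_, ?_, ?_⟩
          · intro x hx
            simp only [Finset.mem_erase] at hx
            have := hsub hx.2
            simp only [Finset.mem_Icc] at this ⊢
            have := hx.1
            omega
          · rw [Finset.card_erase_of_mem hmem, hcard]
          · intro m hm
            simp only [Finset.mem_Icc] at hm
            have hle : cnt (Q.erase (n + 1)) m ≤ cnt Q m :=
              Finset.card_le_card (Finset.filter_subset_filter _ (Finset.erase_subset _ _))
            have := hbal m (Finset.mem_Icc.mpr ⟨hm.1, by omega⟩)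
            omega
        · intro Q1 h1 Q2 h2 heq
          simp only [Finset.mem_filter] at h1 h2
          rw [← Finset.insert_erase h1.2, ← Finset.insert_erase h2.2, heq]
        · intro Q' hQ'
          rw [mem_cset] at hQ'
          obtain ⟨hsub, hcard, hbal⟩ := hQ'
          have hnm : (n + 1) ∉ Q' := by
            intro hc
            have := hsub hc
            simp only [Finset.mem_Icc] at this
            omega
          refine ⟨insert (n + 1) Q', ?_, ?_⟩
          · simp only [Finset.mem_filter, mem_cset]
            refine ⟨⟨?_, ?_, ?_⟩, Finset.mem_insert_self _ _⟩
            · intro x hx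
              rcases Finset.mem_insert.mp hx with rfl | hx
              · simp only [Finset.mem_Icc]; omega
              · have := hsub hx
                simp only [Finset.mem_Icc] at this ⊢
                omega
            · rw [Finset.card_insert_of_notMem hnm, hcard]
              omega
            · intro m hm
              simp only [Finset.mem_Icc] at hm
              by_cases hmn : m ≤ n
              · have : cnt (insert (n + 1) Q') m = cnt Q' m := by
                  unfold cnt
                  rw [Finset.filter_insert, if_neg (by omega)]
                rw [this]
                exact hbal m (Finset.mem_Icc.mpr ⟨hm.1, hmn⟩)
              · have hm1 : m = n + 1 := by omega
                subst hm1
                have hsub2 : insert (n + 1) Q' ⊆ Finset.Icc 1 (n + 1) := by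
                  intro x hx
                  rcases Finset.mem_insert.mp hx with rfl | hx
                  · simp only [Finset.mem_Icc]; omega
                  · have := hsub hx
                    simp only [Finset.mem_Icc] at this ⊢
                    omega
                rw [cnt_eq_card hsub2 (le_refl _), Finset.card_insert_of_notMem hnm, hcard]
                omega
          · exact Finset.erase_insert hnm
      rw [← hsplit, hA, hB, ih a, ih (a - 1)]
      -- arithmetic
      rcases Nat.eq_or_lt_of_le ha with ha1 | ha2
      · -- a = 1
        have ha1' : a = 1 := ha1.symm
        subst ha1'
        have e1 : (n+1).choose 1 = n + 1 := Nat.choose_one_right _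
        have e2 : n.choose 1 = n := Nat.choose_one_right _
        simp only [e1, e2, if_neg (show ¬(1:ℕ) = 0 by omega), show (1:ℕ) - 1 = 0 from rfl,
          if_pos rfl, Nat.choose_zero_right, if_true]
        omega
      · -- a ≥ 2
        obtain ⟨c, rfl⟩ : ∃ c, a = c + 2 := ⟨a - 2, by omega⟩
        have hp1 : (n + 1).choose (c + 2) = n.choose (c + 1) + n.choose (c + 2) :=
          Nat.choose_succ_succ n (c + 1)
        have hp2 : (n + 1).choose (c + 1) = n.choose c + n.choose (c + 1) :=
          Nat.choose_succ_succ n c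
        have hle2 : n.choose c ≤ n.choose (c + 1) :=
          choose_mono_left (by omega) (by omega)
        have hle1 : n.choose (c + 1) ≤ n.choose (c + 2) := by
          by_cases hc : 2 * (c + 2) ≤ n
          · exact choose_mono_left (by omega) hc
          · have han : c + 2 ≤ n := by omega
            have hsym : n.choose (n - (c + 2)) = n.choose (c + 2) := Nat.choose_symm han
            have hna : n - (c + 2) = c + 1 := by omega
            rw [hna] at hsym
            omega
        have r1 : c + 2 - 1 = c + 1 := rfl
        have r2 : c + 2 - 1 - 1 = c := rfl
        have r3 : c + 1 - 1 = c := rfl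
        simp only [r1, r2, r3, if_neg (show ¬ c + 2 = 0 by omega),
          if_neg (show ¬ c + 1 = 0 by omega)]
        omega
    · -- 2a > n+1 : empty
      have hempty : cset (n + 1) a = ∅ := by
        rw [Finset.eq_empty_iff_forall_notMem]
        intro Q hQ
        rw [mem_cset] at hQ
        obtain ⟨hsub, hcard, hbal⟩ := hQ
        have := two_card_le hsub hbal
        omega
      rw [hempty]
      have := choose_le_pred (N := n + 1) (a := a) ha (by omega)
      simp only [Finset.card_empty, if_neg (by omega : ¬ a = 0)]
      omega

lemma mia_eq_card (n a : ℕ) : mia n a = (cset n a).card := by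
  have hset : {w : Equiv.Perm ℕ |
      IsInvolutionOn n w ∧ Avoids321 n w ∧ Set.ncard {k : ℕ | w k ≠ k} = 2 * a} =
      {w : Equiv.Perm ℕ | IsInvolutionOn n w ∧ Avoids321 n w ∧ (Qof n w).card = a} := by
    ext w
    simp only [Set.mem_setOf_eq]
    constructor
    · rintro ⟨h1, h2, h3⟩
      rw [ncard_support h1] at h3
      exact ⟨h1, h2, by omega⟩
    · rintro ⟨h1, h2, h3⟩
      exact ⟨h1, h2, by rw [ncard_support h1, h3]⟩
  have hinj : Set.InjOn (fun w => Qof n w)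
      {w : Equiv.Perm ℕ | IsInvolutionOn n w ∧ Avoids321 n w ∧ (Qof n w).card = a} := by
    rintro w hw w' hw' heq
    exact determined hw.1 hw.2.1 hw'.1 hw'.2.1 heq
  have himg : (fun w => Qof n w) ''
      {w : Equiv.Perm ℕ | IsInvolutionOn n w ∧ Avoids321 n w ∧ (Qof n w).card = a} =
      ↑(cset n a) := by
    ext Q
    constructor
    · rintro ⟨w, ⟨h1, h2, h3⟩, rfl⟩
      simp only [Finset.mem_coe]
      rw [mem_cset]
      refine ⟨Finset.filter_subset _ _, h3, ?_⟩
      intro m hm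
      have hi := (pairCond_of h1 h2).2.2.2.2.1 m
      have hsum : cnt (Pof n w) m + cnt (Qof n w) m ≤ m := by
        have hsub : (Pof n w).filter (fun x => x ≤ m) ∪ (Qof n w).filter (fun x => x ≤ m)
            ⊆ Finset.Icc 1 m := by
          intro x hx
          rcases Finset.mem_union.mp hx with hx | hx
          · simp only [Finset.mem_filter] at hx
            have hxm := mem_Pof.mp hx.1
            simp only [Finset.mem_Icc]
            exact ⟨hxm.1.1, hx.2⟩
          · simp only [Finset.mem_filter] at hx
            have hxm := mem_Qof.mp hx.1
            simp only [Finset.mem_Icc]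
            exact ⟨hxm.1.1, hx.2⟩
        have hdisj2 : Disjoint ((Pof n w).filter (fun x => x ≤ m))
            ((Qof n w).filter (fun x => x ≤ m)) :=
          Finset.disjoint_filter_filter disjoint_Pof_Qof
        have hcard := Finset.card_le_card hsub
        rw [Finset.card_union_of_disjoint hdisj2] at hcard
        have hIcc : (Finset.Icc 1 m).card = m := by rw [Nat.card_Icc]; omega
        unfold cnt
        omega
      omega
    · intro hQ
      simp only [Finset.mem_coe] at hQ
      rw [mem_cset] at hQ
      obtain ⟨hsub, hcard, hbal⟩ := hQ
      obtain ⟨P, hP⟩ := exists_pairCond n Q hsub (ballot_all hsub hbal)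
      obtain ⟨w, h1, h2, h3⟩ := construct hP
      exact ⟨w, ⟨h1, h2, by rw [h3, hcard]⟩, h3⟩
  unfold mia
  rw [hset]
  calc Set.ncard {w : Equiv.Perm ℕ | IsInvolutionOn n w ∧ Avoids321 n w ∧ (Qof n w).card = a}
      = Set.ncard ((fun w => Qof n w) ''
        {w : Equiv.Perm ℕ | IsInvolutionOn n w ∧ Avoids321 n w ∧ (Qof n w).card = a}) :=
        (Set.ncard_image_of_injOn hinj).symm
    _ = Set.ncard (↑(cset n a) : Set (Finset ℕ)) := by rw [himg]
    _ = (cset n a).card := Set.ncard_coe_finset _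

lemma key_nat (n a : ℕ) (h1 : 1 ≤ a) (h2 : 2 * a ≤ n) :
    (n.choose a - n.choose (a - 1)) *
      (a.factorial * (n - 2 * a).factorial * (n - a + 1).factorial) =
      n.factorial * (n - 2 * a + 1).factorial := by
  have han : a ≤ n := by omega
  have ha1n : a - 1 ≤ n := by omega
  have hXD : n.choose a * a.factorial * (n - a).factorial = n.factorial :=
    Nat.choose_mul_factorial_mul_factorial han
  have hYD0 : n.choose (a - 1) * (a - 1).factorial * (n - (a - 1)).factorial = n.factorial :=
    Nat.choose_mul_factorial_mul_factorial ha1n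
  have f1 : (n - a + 1).factorial = (n - a + 1) * (n - a).factorial := Nat.factorial_succ _
  have f2 : a.factorial = a * (a - 1).factorial := by
    have : a - 1 + 1 = a := by omega
    calc a.factorial = (a - 1 + 1).factorial := by rw [this]
      _ = (a - 1 + 1) * (a - 1).factorial := Nat.factorial_succ _
      _ = a * (a - 1).factorial := by rw [this]
  have f3 : n - (a - 1) = n - a + 1 := by omega
  have f4 : (n - 2 * a + 1).factorial = (n - 2 * a + 1) * (n - 2 * a).factorial :=
    Nat.factorial_succ _
  rw [f3] at hYD0
  have hA : n.choose a * (a.factorial * (n - 2 * a).factorial * (n - a + 1).factorial) =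
      (n - a + 1) * (n.factorial * (n - 2 * a).factorial) := by
    calc n.choose a * (a.factorial * (n - 2 * a).factorial * (n - a + 1).factorial)
        = n.choose a * (a.factorial * (n - 2 * a).factorial *
            ((n - a + 1) * (n - a).factorial)) := by rw [f1]
      _ = (n.choose a * a.factorial * (n - a).factorial) *
            ((n - a + 1) * (n - 2 * a).factorial) := by ring
      _ = n.factorial * ((n - a + 1) * (n - 2 * a).factorial) := by rw [hXD]
      _ = (n - a + 1) * (n.factorial * (n - 2 * a).factorial) := by ring
  have hB : n.choose (a - 1) * (a.factorial * (n - 2 * a).factorial * (n - a + 1).factorial) =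
      a * (n.factorial * (n - 2 * a).factorial) := by
    calc n.choose (a - 1) * (a.factorial * (n - 2 * a).factorial * (n - a + 1).factorial)
        = n.choose (a - 1) * ((a * (a - 1).factorial) * (n - 2 * a).factorial *
            (n - a + 1).factorial) := by rw [← f2]
      _ = (n.choose (a - 1) * (a - 1).factorial * (n - a + 1).factorial) *
            (a * (n - 2 * a).factorial) := by ring
      _ = n.factorial * (a * (n - 2 * a).factorial) := by rw [hYD0]
      _ = a * (n.factorial * (n - 2 * a).factorial) := by ring
  calc (n.choose a - n.choose (a - 1)) *
      (a.factorial * (n - 2 * a).factorial * (n - a + 1).factorial)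
      = n.choose a * (a.factorial * (n - 2 * a).factorial * (n - a + 1).factorial) -
        n.choose (a - 1) * (a.factorial * (n - 2 * a).factorial * (n - a + 1).factorial) :=
        Nat.sub_mul _ _ _
    _ = (n - a + 1) * (n.factorial * (n - 2 * a).factorial) -
        a * (n.factorial * (n - 2 * a).factorial) := by rw [hA, hB]
    _ = (n - a + 1 - a) * (n.factorial * (n - 2 * a).factorial) := (Nat.sub_mul _ _ _).symm
    _ = (n - 2 * a + 1) * (n.factorial * (n - 2 * a).factorial) := by
        congr 1
        omega
    _ = n.factorial * (n - 2 * a + 1).factorial := by rw [f4]; ring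


/-- The number of 321-avoiding involutions in `S_n` with exactly `a` transpositions equals
`n!·(n-2a+1)! / (a!·(n-2a)!·(n-a+1)!)`, equivalently `C(n,a) - C(n,a-1)`
(with the convention `C(n,-1) = 0`). -/
theorem mia_eq (n a : ℕ) (hn : 1 ≤ n) (ha : 2 * a ≤ n) :
    ((mia n a : ℝ) =
      ((n.factorial * (n - 2 * a + 1).factorial : ℕ) : ℝ) /
        ((a.factorial * (n - 2 * a).factorial * (n - a + 1).factorial : ℕ) : ℝ)) ∧
    (mia n a : ℤ) = (n.choose a : ℤ) - (if a = 0 then 0 else (n.choose (a - 1) : ℤ)) := by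
  have hcount : mia n a = n.choose a - (if a = 0 then 0 else n.choose (a - 1)) := by
    rw [mia_eq_card, card_cset]
  have hdenne : (a.factorial * (n - 2 * a).factorial * (n - a + 1).factorial : ℕ) ≠ 0 :=
    mul_ne_zero (mul_ne_zero (Nat.factorial_ne_zero _) (Nat.factorial_ne_zero _))
      (Nat.factorial_ne_zero _)
  have hdenne' : ((a.factorial * (n - 2 * a).factorial * (n - a + 1).factorial : ℕ) : ℝ) ≠ 0 :=
    Nat.cast_ne_zero.mpr hdenne
  by_cases h0 : a = 0
  · subst h0
    have hm1 : mia n 0 = 1 := by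
      rw [hcount, if_pos rfl, Nat.choose_zero_right]
    constructor
    · rw [hm1, eq_div_iff hdenne']
      exact_mod_cast (by simp [Nat.factorial_zero] :
        (1 * (Nat.factorial 0 * (n - 2 * 0).factorial * (n - 0 + 1).factorial) : ℕ) =
          n.factorial * (n - 2 * 0 + 1).factorial)
    · rw [hm1, if_pos rfl, Nat.choose_zero_right]
      norm_num
  · have h1a : 1 ≤ a := by omega
    have hle : n.choose (a - 1) ≤ n.choose a := by
      apply choose_mono_left (by omega) ha
    constructor
    · rw [hcount, if_neg h0, eq_div_iff hdenne', ← Nat.cast_mul]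
      exact_mod_cast key_nat n a h1a ha
    · rw [hcount, if_neg h0, Nat.cast_sub hle, if_neg h0]
end

section
/- Let ki_n be the number of Kostant involutions in S_n and mi_n the number of 321-avoiding involutions in S_n. Then the ratio ki_n / mi_n, viewed as a sequence of real numbers, tends to 0 as n → ∞. -/
/-- The special involution `σ_{i,j}` of `S_n`: the permutation of `{1,…,n}` that swaps
`k` and `k+j+1` for every `k` with `i-j ≤ k ≤ i` (these transpositions are pairwise
disjoint, hence commute) and fixes all other points. -/
def sigmaPerm (i j : ℕ) : Equiv.Perm ℕ :=
  ((List.range (j + 1)).map (fun t => Equiv.swap (i - j + t) (i + t + 1))).prod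

/-- The parameter constraints `1 ≤ i ≤ n-1` and `0 ≤ j ≤ min(i-1, n-1-i)` for a special
involution `σ_{i,j}` of `S_n`. -/
def SpecialParams (n i j : ℕ) : Prop :=
  1 ≤ i ∧ i ≤ n - 1 ∧ j ≤ min (i - 1) (n - 1 - i)

/-- The extended support `{i-j-1, i-j, …, i+j+2}` of `σ_{i,j}`. -/
def extSupport (i j : ℕ) : Finset ℕ := Finset.Icc (i - j - 1) (i + j + 2)

/-- Two special involutions (given by their parameters) are distant if their extended
supports have at most one common element. -/
def Distant (p q : ℕ × ℕ) : Prop :=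
  (extSupport p.1 p.2 ∩ extSupport q.1 q.2).card ≤ 1

/-- A Kostant involution in `S_n`: a product of pairwise distant special involutions
(the identity being the empty product). -/
def IsKostant (n : ℕ) (w : Equiv.Perm ℕ) : Prop :=
  ∃ L : List (ℕ × ℕ),
    (∀ p ∈ L, SpecialParams n p.1 p.2) ∧
    L.Pairwise Distant ∧
    w = (L.map (fun p => sigmaPerm p.1 p.2)).prod


/-- The total number of Kostant involutions in `S_n`. -/
noncomputable def kiTotal (n : ℕ) : ℕ :=
  Set.ncard {w : Equiv.Perm ℕ | IsKostant n w}

-- ### Auxiliary development, Part A (upper bound for `kiTotal`)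

section Aux

-- interval family counting


/-- Families of intervals `[a,b] ⊆ [0,M]` with `b ≥ a+3`, pairwise overlapping in
at most one point. -/
def famSet (M : ℕ) : Finset (Finset (ℕ × ℕ)) :=
  ((Finset.range (M+1) ×ˢ Finset.range (M+1)).powerset).filter
    (fun S => (∀ p ∈ S, p.1 + 3 ≤ p.2) ∧
      ∀ p ∈ S, ∀ q ∈ S, p ≠ q → (p.2 ≤ q.1 ∨ q.2 ≤ p.1))

lemma mem_famSet {M : ℕ} {S : Finset (ℕ × ℕ)} :
    S ∈ famSet M ↔ (∀ p ∈ S, p.1 < M+1 ∧ p.2 < M+1) ∧ (∀ p ∈ S, p.1 + 3 ≤ p.2) ∧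
      ∀ p ∈ S, ∀ q ∈ S, p ≠ q → (p.2 ≤ q.1 ∨ q.2 ≤ p.1) := by
  simp only [famSet, Finset.mem_filter, Finset.mem_powerset]
  constructor
  · rintro ⟨hsub, h1, h2⟩
    refine ⟨fun p hp => ?_, h1, h2⟩
    have := hsub hp
    simpa [Finset.mem_product] using this
  · rintro ⟨h0, h1, h2⟩
    refine ⟨fun p hp => ?_, h1, h2⟩
    simp only [Finset.mem_product, Finset.mem_range]
    exact h0 p hp

lemma famSet_cover (M : ℕ) :
    famSet (M+1) ⊆ famSet M ∪ (Finset.range (M-1)).biUnion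
      (fun a => (famSet a).image (insert (a, M+1))) := by
  intro S hS
  rw [mem_famSet] at hS
  obtain ⟨hrange, hlen, hpair⟩ := hS
  by_cases hex : ∃ p ∈ S, p.2 = M+1
  · obtain ⟨p, hpS, hp2⟩ := hex
    have hp3 : p.1 + 3 ≤ M + 1 := hp2 ▸ hlen p hpS
    refine Finset.mem_union_right _ (Finset.mem_biUnion.2 ⟨p.1, ?_, ?_⟩)
    · exact Finset.mem_range.2 (by omega)
    · refine Finset.mem_image.2 ⟨S.erase p, ?_, ?_⟩
      · rw [mem_famSet]
        have hsml : ∀ q ∈ S.erase p, q.2 ≤ p.1 := by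
          intro q hq
          have hqS := Finset.mem_of_mem_erase hq
          have hqp := Finset.ne_of_mem_erase hq
          rcases hpair q hqS p hpS hqp with h | h
          · exact h
          · have := hlen q hqS
            have := (hrange q hqS).2
            omega
        refine ⟨fun q hq => ?_, fun q hq => hlen q (Finset.mem_of_mem_erase hq),
          fun q hq r hr hqr => hpair q (Finset.mem_of_mem_erase hq) r
            (Finset.mem_of_mem_erase hr) hqr⟩
        have h2 := hsml q hq
        have h1 := hlen q (Finset.mem_of_mem_erase hq)
        omega
      · have : (p.1, M+1) = p := by
          rw [← hp2]
        rw [this]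
        exact Finset.insert_erase hpS
  · push_neg at hex
    refine Finset.mem_union_left _ ?_
    rw [mem_famSet]
    refine ⟨fun q hq => ?_, hlen, hpair⟩
    have := hrange q hq
    have := hex q hq
    have := hlen q hq
    omega

lemma geom_sum_bound (J : ℕ) :
    4 * (∑ a ∈ Finset.range (J+1), 5^(J-a) * 9^a) ≤ 9^(J+1) := by
  induction J with
  | zero => simp
  | succ J ih =>
    have hsplit : ∑ a ∈ Finset.range (J+2), 5^(J+1-a) * 9^a
        = (∑ a ∈ Finset.range (J+1), 5^(J+1-a) * 9^a) + 9^(J+1) := by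
      rw [Finset.sum_range_succ]; simp
    have hfive : ∑ a ∈ Finset.range (J+1), 5^(J+1-a) * 9^a
        = 5 * ∑ a ∈ Finset.range (J+1), 5^(J-a) * 9^a := by
      rw [Finset.mul_sum]
      refine Finset.sum_congr rfl (fun a ha => ?_)
      have : J + 1 - a = (J - a) + 1 := by
        have := Finset.mem_range.1 ha; omega
      rw [this, pow_succ]
      ring
    calc 4 * (∑ a ∈ Finset.range (J+2), 5^(J+1-a) * 9^a)
        = 5 * (4 * ∑ a ∈ Finset.range (J+1), 5^(J-a) * 9^a) + 4 * 9^(J+1) := by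
          rw [hsplit, hfive]; ring
      _ ≤ 5 * 9^(J+1) + 4 * 9^(J+1) := by
          have := ih; nlinarith
      _ = 9^(J+2) := by ring

lemma famSet_small {M : ℕ} (hM : M ≤ 2) : famSet M ⊆ {∅} := by
  intro S hS
  rw [mem_famSet] at hS
  obtain ⟨hrange, hlen, -⟩ := hS
  simp only [Finset.mem_singleton]
  by_contra h
  obtain ⟨p, hp⟩ := Finset.nonempty_iff_ne_empty.2 h
  have := hrange p hp
  have := hlen p hp
  omega

lemma famSet_card_bound : ∀ M : ℕ, 5^M * (famSet M).card ≤ 2 * 9^M := by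
  intro M
  induction M using Nat.strong_induction_on with
  | _ M ih =>
    classical
    rcases le_or_gt M 2 with hM | hM
    · have hcard : (famSet M).card ≤ 1 := by
        calc (famSet M).card ≤ ({∅} : Finset (Finset (ℕ×ℕ))).card :=
              Finset.card_le_card (famSet_small hM)
          _ = 1 := Finset.card_singleton _
      calc 5^M * (famSet M).card ≤ 5^M * 1 := by exact Nat.mul_le_mul_left _ hcard
        _ ≤ 2 * 9^M := by
            have : 5^M ≤ 9^M := Nat.pow_le_pow_left (by norm_num) M
            omega
    · -- M ≥ 3, write M = K+1
      obtain ⟨K, rfl⟩ : ∃ K, M = K + 1 := ⟨M - 1, by omega⟩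
      have hK : 2 ≤ K := by omega
      have hcov := famSet_cover K
      have hcard : (famSet (K+1)).card ≤
          (famSet K).card + ∑ a ∈ Finset.range (K-1), (famSet a).card := by
        have h1 := Finset.card_le_card hcov
        have h2 := Finset.card_union_le (famSet K) ((Finset.range (K-1)).biUnion
                (fun a => (famSet a).image (insert (a, K+1))))
        have h3 : ((Finset.range (K-1)).biUnion
                (fun a => (famSet a).image (insert (a, K+1)))).card
            ≤ ∑ a ∈ Finset.range (K-1), ((famSet a).image (insert (a, K+1))).card :=
          Finset.card_biUnion_le
        have h4 : ∑ a ∈ Finset.range (K-1), ((famSet a).image (insert (a, K+1))).card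
            ≤ ∑ a ∈ Finset.range (K-1), (famSet a).card :=
          Finset.sum_le_sum (fun a ha => Finset.card_image_le)
        omega
      -- multiply by 4 * 5^(K+1)
      have hsum : 5^(K+1) * ∑ a ∈ Finset.range (K-1), (famSet a).card
          ≤ 2 * ∑ a ∈ Finset.range (K-1), 5^(K+1-a) * 9^a := by
        rw [Finset.mul_sum, Finset.mul_sum]
        refine Finset.sum_le_sum (fun a ha => ?_)
        have haK : a < K - 1 := Finset.mem_range.1 ha
        have hsplit : 5^(K+1) = 5^(K+1-a) * 5^a := by
          rw [← pow_add]
          congr 1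
          omega
        calc 5^(K+1) * (famSet a).card = 5^(K+1-a) * (5^a * (famSet a).card) := by
              rw [hsplit]; ring
          _ ≤ 5^(K+1-a) * (2 * 9^a) := Nat.mul_le_mul_left _ (ih a (by omega))
          _ = 2 * (5^(K+1-a) * 9^a) := by ring
      have hgeo : 4 * ∑ a ∈ Finset.range (K-1), 5^(K+1-a) * 9^a ≤ 125 * 9^(K-1) := by
        have heq : ∑ a ∈ Finset.range (K-1), 5^(K+1-a) * 9^a
            = 125 * ∑ a ∈ Finset.range (K-1), 5^(K-2-a) * 9^a := by
          rw [Finset.mul_sum]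
          refine Finset.sum_congr rfl (fun a ha => ?_)
          have haK : a < K - 1 := Finset.mem_range.1 ha
          have : K + 1 - a = (K-2-a) + 3 := by omega
          rw [this, pow_add]
          ring
        have hrw : K - 1 = (K - 2) + 1 := by omega
        have := geom_sum_bound (K-2)
        rw [heq]
        rw [← hrw] at this
        nlinarith [this]
      have hKbound : 5^K * (famSet K).card ≤ 2 * 9^K := ih K (by omega)
      have hmain : 4 * (5^(K+1) * (famSet (K+1)).card) ≤ 8 * 9^(K+1) := by
        have h9 : (9:ℕ)^(K+1) = 81 * 9^(K-1) := by
          have : K + 1 = (K-1) + 2 := by omega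
          rw [this, pow_add]; ring
        have h9K : (9:ℕ)^K = 9 * 9^(K-1) := by
          have hK1 : K = (K-1) + 1 := by omega
          nth_rewrite 1 [hK1]
          rw [pow_succ]; ring
        calc 4 * (5^(K+1) * (famSet (K+1)).card)
            ≤ 4 * (5^(K+1) * ((famSet K).card + ∑ a ∈ Finset.range (K-1), (famSet a).card)) := by
              have := Nat.mul_le_mul_left (5^(K+1)) hcard
              omega
          _ = 4 * (5 * (5^K * (famSet K).card))
              + 4 * (5^(K+1) * ∑ a ∈ Finset.range (K-1), (famSet a).card) := by
              rw [pow_succ]; ring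
          _ ≤ 4 * (5 * (2 * 9^K)) + 4 * (2 * ∑ a ∈ Finset.range (K-1), 5^(K+1-a) * 9^a) := by
              gcongr
          _ = 40 * 9^K + 2 * (4 * ∑ a ∈ Finset.range (K-1), 5^(K+1-a) * 9^a) := by ring
          _ ≤ 40 * 9^K + 2 * (125 * 9^(K-1)) := by gcongr
          _ ≤ 8 * 9^(K+1) := by rw [h9, h9K]; nlinarith [pow_pos (show (0:ℕ) < 9 by norm_num) (K-1)]
      omega

-- from Kostant involutions to interval families


lemma listProd_fixed {l : List (Equiv.Perm ℕ)} {x : ℕ} (h : ∀ σ ∈ l, σ x = x) :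
    l.prod x = x := by
  induction l with
  | nil => rfl
  | cons a t ih =>
    rw [List.prod_cons, Equiv.Perm.mul_apply]
    rw [ih (fun σ hσ => h σ (List.mem_cons_of_mem _ hσ)), h a List.mem_cons_self]

lemma sigmaPerm_fixed {i j x : ℕ} (h : x < i - j ∨ i + j + 1 < x) : sigmaPerm i j x = x := by
  unfold sigmaPerm
  apply listProd_fixed
  intro σ hσ
  simp only [List.mem_map, List.mem_range] at hσ
  obtain ⟨t, ht, rfl⟩ := hσ
  apply Equiv.swap_apply_of_ne_of_ne <;> omega

lemma sigmaPerm_support {i j x : ℕ} (h : sigmaPerm i j x ≠ x) : i - j ≤ x ∧ x ≤ i + j + 1 := by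
  by_contra hc
  exact h (sigmaPerm_fixed (by omega))

lemma specialParams_facts {n i j : ℕ} (h : SpecialParams n i j) :
    1 ≤ i ∧ j + 1 ≤ i ∧ i + j + 1 ≤ n ∧ 2 ≤ n := by
  obtain ⟨h1, h2, h3⟩ := h
  rw [le_min_iff] at h3
  omega

lemma natIcc_inter (a b c d : ℕ) :
    Finset.Icc a b ∩ Finset.Icc c d = Finset.Icc (max a c) (min b d) := by
  ext x
  simp only [Finset.mem_inter, Finset.mem_Icc]
  omega

lemma distant_sep {n : ℕ} {p q : ℕ × ℕ} (hp : SpecialParams n p.1 p.2)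
    (hq : SpecialParams n q.1 q.2) (h : Distant p q) :
    p.1 + p.2 + 2 ≤ q.1 - q.2 - 1 ∨ q.1 + q.2 + 2 ≤ p.1 - p.2 - 1 := by
  have h1 := specialParams_facts hp
  have h2 := specialParams_facts hq
  unfold Distant extSupport at h
  rw [natIcc_inter, Nat.card_Icc] at h
  omega

lemma distant_irrefl {n : ℕ} {p : ℕ × ℕ} (hp : SpecialParams n p.1 p.2) : ¬ Distant p p := by
  have h1 := specialParams_facts hp
  unfold Distant extSupport
  rw [Finset.inter_self, Nat.card_Icc]
  omega

lemma distant_symm {p q : ℕ × ℕ} (h : Distant p q) : Distant q p := by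
  unfold Distant at *
  rwa [Finset.inter_comm]

lemma sigma_commute {n : ℕ} {p q : ℕ × ℕ} (hp : SpecialParams n p.1 p.2)
    (hq : SpecialParams n q.1 q.2) (h : Distant p q) :
    Commute (sigmaPerm p.1 p.2) (sigmaPerm q.1 q.2) := by
  have hsep := distant_sep hp hq h
  have h1 := specialParams_facts hp
  have h2 := specialParams_facts hq
  apply Equiv.Perm.Disjoint.commute
  intro x
  by_cases hx : sigmaPerm p.1 p.2 x = x
  · exact Or.inl hx
  · right
    have hs := sigmaPerm_support hx
    apply sigmaPerm_fixed
    omega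

noncomputable def prodOf (S : Finset (ℕ × ℕ)) : Equiv.Perm ℕ :=
  (S.toList.map (fun p => sigmaPerm p.1 p.2)).prod

instance distantDec : ∀ p q : ℕ × ℕ, Decidable (Distant p q) := fun p q => by
  unfold Distant; infer_instance

instance spDec : ∀ n i j, Decidable (SpecialParams n i j) := fun n i j => by
  unfold SpecialParams; infer_instance

def paramFam (n : ℕ) : Finset (Finset (ℕ × ℕ)) :=
  ((Finset.range n ×ˢ Finset.range n).powerset).filter
    (fun S => (∀ p ∈ S, SpecialParams n p.1 p.2) ∧ ∀ p ∈ S, ∀ q ∈ S, p ≠ q → Distant p q)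

lemma kostant_subset (n : ℕ) :
    {w : Equiv.Perm ℕ | IsKostant n w} ⊆ (fun S => prodOf S) '' ↑(paramFam n) := by
  rintro w ⟨L, hLp, hLd, rfl⟩
  have hnodup : L.Nodup := by
    refine hLd.imp_of_mem (fun {a b} ha hb hab => ?_)
    intro hEq
    subst hEq
    exact distant_irrefl (hLp a ha) hab
  refine ⟨L.toFinset, ?_, ?_⟩
  · simp only [Finset.mem_coe, paramFam, Finset.mem_filter, Finset.mem_powerset]
    refine ⟨?_, fun p hp => hLp p (List.mem_toFinset.1 hp), fun p hp q hq hpq => ?_⟩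
    · intro p hp
      have hsp := specialParams_facts (hLp p (List.mem_toFinset.1 hp))
      simp only [Finset.mem_product, Finset.mem_range]
      omega
    · haveI : Std.Symm Distant := ⟨fun a b h => distant_symm h⟩
      exact hLd.forall (List.mem_toFinset.1 hp)
        (List.mem_toFinset.1 hq) hpq
  · -- prodOf L.toFinset = product over L
    have hperm : List.Perm L L.toFinset.toList := by
      apply List.perm_of_nodup_nodup_toFinset_eq hnodup (Finset.nodup_toList _)
      rw [Finset.toList_toFinset]
    have hpc : (L.map (fun p => sigmaPerm p.1 p.2)).Pairwise Commute := by
      rw [List.pairwise_map]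
      refine hLd.imp_of_mem (fun {a b} ha hb hab => ?_)
      exact sigma_commute (hLp a ha) (hLp b hb) hab
    have := (hperm.map (fun p => sigmaPerm p.1 p.2)).prod_eq' hpc
    show prodOf L.toFinset = _
    rw [prodOf]
    exact this.symm

example : True := trivial

lemma param_encode_inj {n : ℕ} {p q : ℕ × ℕ} (hp : SpecialParams n p.1 p.2)
    (hq : SpecialParams n q.1 q.2)
    (h : (p.1 - p.2 - 1, p.1 + p.2 + 2) = (q.1 - q.2 - 1, q.1 + q.2 + 2)) : p = q := by
  have h1 := specialParams_facts hp
  have h2 := specialParams_facts hq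
  rw [Prod.mk.injEq] at h
  have : p.1 = q.1 ∧ p.2 = q.2 := by omega
  exact Prod.ext this.1 this.2

lemma kiTotal_le_famSet (n : ℕ) : kiTotal n ≤ (famSet (n+1)).card := by
  classical
  have h1 : kiTotal n ≤ (paramFam n).card := by
    calc kiTotal n ≤ Set.ncard ((fun S => prodOf S) '' ↑(paramFam n)) :=
          Set.ncard_le_ncard (kostant_subset n) ((paramFam n).finite_toSet.image _)
      _ ≤ Set.ncard (↑(paramFam n) : Set (Finset (ℕ×ℕ))) :=
          Set.ncard_image_le (paramFam n).finite_toSet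
      _ = (paramFam n).card := Set.ncard_coe_finset _
  refine h1.trans ?_
  apply Finset.card_le_card_of_injOn
      (fun S => S.image (fun p => (p.1 - p.2 - 1, p.1 + p.2 + 2)))
  · -- maps into famSet (n+1)
    intro S hS
    simp only [paramFam, Finset.mem_coe, Finset.mem_filter, Finset.mem_powerset] at hS
    obtain ⟨hsub, hparams, hdist⟩ := hS
    rw [Finset.mem_coe, mem_famSet]
    refine ⟨?_, ?_, ?_⟩
    · intro q hq
      simp only [Finset.mem_image] at hq
      obtain ⟨p, hp, rfl⟩ := hq
      have := specialParams_facts (hparams p hp)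
      omega
    · intro q hq
      simp only [Finset.mem_image] at hq
      obtain ⟨p, hp, rfl⟩ := hq
      have := specialParams_facts (hparams p hp)
      simp only
      omega
    · intro q hq r hr hqr
      simp only [Finset.mem_image] at hq hr
      obtain ⟨p, hp, rfl⟩ := hq
      obtain ⟨p', hp', rfl⟩ := hr
      have hne : p ≠ p' := by
        rintro rfl; exact hqr rfl
      have := distant_sep (hparams p hp) (hparams p' hp') (hdist p hp p' hp' hne)
      simpa using this
  · -- injective on paramFam
    intro S hS S' hS' himg
    simp only [paramFam, Finset.mem_coe, Finset.mem_filter, Finset.mem_powerset] at hS hS'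
    obtain ⟨-, hparams, -⟩ := hS
    obtain ⟨-, hparams', -⟩ := hS'
    ext p
    constructor
    · intro hp
      have : (p.1 - p.2 - 1, p.1 + p.2 + 2)
          ∈ S'.image (fun p : ℕ×ℕ => (p.1 - p.2 - 1, p.1 + p.2 + 2)) := by
        rw [show S'.image (fun p : ℕ×ℕ => (p.1 - p.2 - 1, p.1 + p.2 + 2))
            = S.image (fun p : ℕ×ℕ => (p.1 - p.2 - 1, p.1 + p.2 + 2)) from himg.symm]
        exact Finset.mem_image_of_mem _ hp
      simp only [Finset.mem_image] at this
      obtain ⟨q, hq, hEq⟩ := this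
      rwa [← param_encode_inj (hparams' q hq) (hparams p hp) hEq]
    · intro hp
      have : (p.1 - p.2 - 1, p.1 + p.2 + 2)
          ∈ S.image (fun p : ℕ×ℕ => (p.1 - p.2 - 1, p.1 + p.2 + 2)) := by
        rw [show S.image (fun p : ℕ×ℕ => (p.1 - p.2 - 1, p.1 + p.2 + 2))
            = S'.image (fun p : ℕ×ℕ => (p.1 - p.2 - 1, p.1 + p.2 + 2)) from himg]
        exact Finset.mem_image_of_mem _ hp
      simp only [Finset.mem_image] at this
      obtain ⟨q, hq, hEq⟩ := this
      rwa [← param_encode_inj (hparams q hq) (hparams' p hp) hEq]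

lemma kiTotal_pow_bound (n : ℕ) : 5^(n+1) * kiTotal n ≤ 2 * 9^(n+1) :=
  le_trans (Nat.mul_le_mul_left _ (kiTotal_le_famSet n)) (famSet_card_bound (n+1))

-- ### Part B (lower bound for `mi`)


open scoped Classical in
noncomputable def ballotSet (m : ℕ) : Finset (Finset ℕ) :=
  ((Finset.Icc 1 (2*m)).powerset).filter
    (fun A => A.card = m ∧ ∀ t ∈ Finset.Icc 1 (2*m), t ≤ 2 * (A ∩ Finset.Icc 1 t).card)

lemma mem_ballotSet {m : ℕ} {A : Finset ℕ} :
    A ∈ ballotSet m ↔ A ⊆ Finset.Icc 1 (2*m) ∧ A.card = m ∧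
      ∀ t ∈ Finset.Icc 1 (2*m), t ≤ 2 * (A ∩ Finset.Icc 1 t).card := by
  simp only [ballotSet, Finset.mem_filter, Finset.mem_powerset, and_assoc]

-- rank lemmas

lemma filter_le_orderIso {X : Finset ℕ} {m : ℕ} (hX : X.card = m) (i : Fin m) :
    (X.filter (fun x => x ≤ (X.orderIsoOfFin hX i : ℕ))).card = i + 1 := by
  classical
  set e := X.orderIsoOfFin hX with he
  have himg : X.filter (fun x => x ≤ (e i : ℕ))
      = (Finset.univ.filter (fun j : Fin m => j ≤ i)).image (fun j => (e j : ℕ)) := by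
    ext x
    simp only [Finset.mem_filter, Finset.mem_image, Finset.mem_univ, true_and]
    constructor
    · rintro ⟨hx, hle⟩
      refine ⟨e.symm ⟨x, hx⟩, ?_, by simp⟩
      rw [← e.le_iff_le]
      exact Subtype.coe_le_coe.1 (by simpa using hle)
    · rintro ⟨j, hj, rfl⟩
      exact ⟨(e j).2, by exact_mod_cast e.le_iff_le.2 hj⟩
  rw [himg, Finset.card_image_of_injective _
    (fun a b hab => e.injective (Subtype.ext hab))]
  have : Finset.univ.filter (fun j : Fin m => j ≤ i) = Finset.Iic i := by
    ext j; simp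
  rw [this, Fin.card_Iic]

lemma orderIso_le_of_card {X : Finset ℕ} {m : ℕ} (hX : X.card = m) (i : Fin m) (b : ℕ)
    (hcard : (i : ℕ) + 1 ≤ (X.filter (fun x => x ≤ b)).card) :
    (X.orderIsoOfFin hX i : ℕ) ≤ b := by
  classical
  set e := X.orderIsoOfFin hX with he
  by_contra hlt
  push_neg at hlt
  have hsub : X.filter (fun x => x ≤ b)
      ⊆ (Finset.univ.filter (fun j : Fin m => j < i)).image (fun j => (e j : ℕ)) := by
    intro x hx
    simp only [Finset.mem_filter] at hx
    simp only [Finset.mem_image, Finset.mem_univ, Finset.mem_filter, true_and]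
    refine ⟨e.symm ⟨x, hx.1⟩, ?_, by simp⟩
    rw [← e.lt_iff_lt]
    simp only [OrderIso.apply_symm_apply]
    exact Subtype.coe_lt_coe.1 (lt_of_le_of_lt hx.2 hlt)
  have hle := Finset.card_le_card hsub
  rw [Finset.card_image_of_injective _
    (fun a b hab => e.injective (Subtype.ext hab))] at hle
  have : Finset.univ.filter (fun j : Fin m => j < i) = Finset.Iio i := by
    ext j; simp
  rw [this, Fin.card_Iio] at hle
  omega

lemma ballot_to_mi (n m : ℕ) (h2m : 2*m ≤ n) (A : Finset ℕ) (hA : A ∈ ballotSet m) :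
    ∃ w : Equiv.Perm ℕ, (IsInvolutionOn n w ∧ Avoids321 n w) ∧
      (Finset.Icc 1 (2*m)).filter (fun x => x < w x) = A := by
  classical
  rw [mem_ballotSet] at hA
  obtain ⟨hAsub, hAcard, hballot⟩ := hA
  set B : Finset ℕ := Finset.Icc 1 (2*m) \ A with hBdef
  have hBsub : B ⊆ Finset.Icc 1 (2*m) := Finset.sdiff_subset
  have hBcard : B.card = m := by
    rw [hBdef, Finset.card_sdiff_of_subset hAsub, Nat.card_Icc, hAcard]
    omega
  have hAB : ∀ x, x ∈ A → x ∈ B → False := by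
    intro x hxA hxB
    rw [hBdef, Finset.mem_sdiff] at hxB
    exact hxB.2 hxA
  set eA := A.orderIsoOfFin hAcard with heA
  set eB := B.orderIsoOfFin hBcard with heB
  -- strict ballot inequality
  have hlt : ∀ i : Fin m, (eA i : ℕ) < (eB i : ℕ) := by
    intro i
    set b : ℕ := (eB i : ℕ) with hb
    have hbB : b ∈ B := (eB i).2
    have hbIcc : b ∈ Finset.Icc 1 (2*m) := hBsub hbB
    have hrankB : (B.filter (fun x => x ≤ b)).card = (i : ℕ) + 1 := filter_le_orderIso hBcard i
    have hAfil : A.filter (fun x => x ≤ b) = A ∩ Finset.Icc 1 b := by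
      ext x
      simp only [Finset.mem_filter, Finset.mem_inter, Finset.mem_Icc]
      constructor
      · rintro ⟨hx, hle⟩
        have := Finset.mem_Icc.1 (hAsub hx)
        exact ⟨hx, this.1, hle⟩
      · rintro ⟨hx, -, hle⟩
        exact ⟨hx, hle⟩
    have hBfil : B.filter (fun x => x ≤ b) = B ∩ Finset.Icc 1 b := by
      ext x
      simp only [Finset.mem_filter, Finset.mem_inter, Finset.mem_Icc]
      constructor
      · rintro ⟨hx, hle⟩
        have := Finset.mem_Icc.1 (hBsub hx)
        exact ⟨hx, this.1, hle⟩
      · rintro ⟨hx, -, hle⟩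
        exact ⟨hx, hle⟩
    have hpart : (A ∩ Finset.Icc 1 b).card + (B ∩ Finset.Icc 1 b).card = b := by
      have hdisj : Disjoint (A ∩ Finset.Icc 1 b) (B ∩ Finset.Icc 1 b) := by
        rw [Finset.disjoint_left]
        intro x hx hx'
        exact hAB x (Finset.mem_inter.1 hx).1 (Finset.mem_inter.1 hx').1
      have hunion : (A ∩ Finset.Icc 1 b) ∪ (B ∩ Finset.Icc 1 b) = Finset.Icc 1 b := by
        rw [← Finset.union_inter_distrib_right]
        have : A ∪ B = Finset.Icc 1 (2*m) := by
          rw [hBdef, Finset.union_sdiff_of_subset hAsub]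
        rw [this]
        apply Finset.inter_eq_right.2
        intro x hx
        have := Finset.mem_Icc.1 hx
        have hb2m := (Finset.mem_Icc.1 hbIcc).2
        exact Finset.mem_Icc.2 ⟨this.1, le_trans this.2 hb2m⟩
      rw [← Finset.card_union_of_disjoint hdisj, hunion, Nat.card_Icc]
      omega
    have hb2 := hballot b hbIcc
    have hcardA : (i : ℕ) + 1 ≤ (A.filter (fun x => x ≤ b)).card := by
      rw [hAfil]
      rw [hBfil] at hrankB
      omega
    have hle := orderIso_le_of_card hAcard i b hcardA
    rw [← heA] at hle
    have hne : (eA i : ℕ) ≠ b := by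
      intro hEq
      exact hAB b (hEq ▸ (eA i).2) hbB
    omega
  -- the involution
  set f : ℕ → ℕ := fun x =>
    if hx : x ∈ A then (eB (eA.symm ⟨x, hx⟩) : ℕ)
    else if hx' : x ∈ B then (eA (eB.symm ⟨x, hx'⟩) : ℕ)
    else x with hfdef
  have hfA : ∀ x (hx : x ∈ A), f x = (eB (eA.symm ⟨x, hx⟩) : ℕ) := by
    intro x hx
    simp only [hfdef, dif_pos hx]
  have hfB : ∀ x (hx : x ∈ B), f x = (eA (eB.symm ⟨x, hx⟩) : ℕ) := by
    intro x hx
    have hxA : x ∉ A := fun h => hAB x h hx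
    simp only [hfdef, dif_neg hxA, dif_pos hx]
  have hffix : ∀ x, x ∉ A → x ∉ B → f x = x := by
    intro x hx hx'
    simp only [hfdef, dif_neg hx, dif_neg hx']
  have hfA_mem : ∀ x (hx : x ∈ A), f x ∈ B := by
    intro x hx
    rw [hfA x hx]
    exact (eB (eA.symm ⟨x, hx⟩)).2
  have hfB_mem : ∀ x (hx : x ∈ B), f x ∈ A := by
    intro x hx
    rw [hfB x hx]
    exact (eA (eB.symm ⟨x, hx⟩)).2
  have hinvol : Function.Involutive f := by
    intro x
    by_cases hx : x ∈ A
    · have h1 := hfA x hx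
      have hmem : f x ∈ B := hfA_mem x hx
      rw [hfB (f x) hmem]
      have : (⟨f x, hmem⟩ : {y // y ∈ B}) = eB (eA.symm ⟨x, hx⟩) := Subtype.ext h1
      rw [this]
      simp
    · by_cases hx' : x ∈ B
      · have h1 := hfB x hx'
        have hmem : f x ∈ A := hfB_mem x hx'
        rw [hfA (f x) hmem]
        have : (⟨f x, hmem⟩ : {y // y ∈ A}) = eA (eB.symm ⟨x, hx'⟩) := Subtype.ext h1
        rw [this]
        simp
      · rw [hffix x hx hx', hffix x hx hx']
  set w : Equiv.Perm ℕ := hinvol.toPerm f with hwdef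
  have hwapp : ∀ x, w x = f x := fun x => rfl
  -- basic order facts
  have hA_lt : ∀ x (hx : x ∈ A), x < f x := by
    intro x hx
    rw [hfA x hx]
    have := hlt (eA.symm ⟨x, hx⟩)
    simpa using this
  have hB_gt : ∀ x (hx : x ∈ B), f x < x := by
    intro x hx
    rw [hfB x hx]
    have := hlt (eB.symm ⟨x, hx⟩)
    simpa using this
  have hmonoA : ∀ x y (hx : x ∈ A) (hy : y ∈ A), x < y → f x < f y := by
    intro x y hx hy hxy
    rw [hfA x hx, hfA y hy]
    have h1 : eA.symm ⟨x, hx⟩ < eA.symm ⟨y, hy⟩ := by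
      rw [eA.symm.lt_iff_lt]
      exact Subtype.mk_lt_mk.2 hxy
    exact_mod_cast Subtype.coe_lt_coe.2 (eB.lt_iff_lt.2 h1)
  have hmonoB : ∀ x y (hx : x ∈ B) (hy : y ∈ B), x < y → f x < f y := by
    intro x y hx hy hxy
    rw [hfB x hx, hfB y hy]
    have h1 : eB.symm ⟨x, hx⟩ < eB.symm ⟨y, hy⟩ := by
      rw [eB.symm.lt_iff_lt]
      exact Subtype.mk_lt_mk.2 hxy
    exact_mod_cast Subtype.coe_lt_coe.2 (eA.lt_iff_lt.2 h1)
  have hrange : ∀ x, x ∈ A ∨ x ∈ B → 1 ≤ x ∧ x ≤ 2*m := by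
    intro x hx
    rcases hx with h | h
    · exact Finset.mem_Icc.1 (hAsub h)
    · exact Finset.mem_Icc.1 (hBsub h)
  have hout : ∀ x, x ∉ A → x ∉ B → (x < 1 ∨ 2*m < x) ∨ (1 ≤ x ∧ x ≤ 2*m) ∧ False := by
    intro x hx hx'
    by_cases hIcc : x ∈ Finset.Icc 1 (2*m)
    · exfalso
      by_cases hxA : x ∈ A
      · exact hx hxA
      · exact hx' (Finset.mem_sdiff.2 ⟨hIcc, hxA⟩)
    · left
      rw [Finset.mem_Icc] at hIcc
      omega
  have hfix_out : ∀ x, 2*m < x → f x = x := by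
    intro x hx
    have hxA : x ∉ A := fun h => by have := (hrange x (Or.inl h)).2; omega
    have hxB : x ∉ B := fun h => by have := (hrange x (Or.inr h)).2; omega
    exact hffix x hxA hxB
  refine ⟨w, ⟨⟨?_, ?_⟩, ?_⟩, ?_⟩
  · -- moved points in [1, n]
    intro k hk
    rw [hwapp] at hk
    by_cases hkA : k ∈ A
    · have := hrange k (Or.inl hkA); omega
    · by_cases hkB : k ∈ B
      · have := hrange k (Or.inr hkB); omega
      · exact absurd (hffix k hkA hkB) hk
  · -- involution
    ext x
    simp only [Equiv.Perm.mul_apply, Equiv.Perm.one_apply]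
    rw [hwapp, hwapp]
    exact hinvol x
  · -- 321-avoiding
    intro p q r hp hpq hqr hrn hcon
    rw [hwapp, hwapp, hwapp] at hcon
    obtain ⟨h1, h2⟩ := hcon
    by_cases hqA : q ∈ A
    · -- f q > q; contradiction from p side
      by_cases hpA : p ∈ A
      · exact absurd h1 (not_lt.2 (le_of_lt (hmonoA p q hpA hqA hpq)))
      · by_cases hpB : p ∈ B
        · have : f p < p := hB_gt p hpB
          have : f p < f q := by
            have := hA_lt q hqA
            omega
          omega
        · have : f p = p := hffix p hpA hpB
          have := hA_lt q hqA
          omega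
    · by_cases hqB : q ∈ B
      · -- f q < q; contradiction from r side
        by_cases hrA : r ∈ A
        · have h3 : r < f r := hA_lt r hrA
          have h4 : f q < q := hB_gt q hqB
          omega
        · by_cases hrB : r ∈ B
          · exact absurd h2 (not_lt.2 (le_of_lt (hmonoB q r hqB hrB hqr)))
          · have : f r = r := hffix r hrA hrB
            have := hB_gt q hqB
            omega
      · -- q fixed, hence q > 2m, hence r > 2m fixed
        have hq2m : 2*m < q := by
          rcases hout q hqA hqB with h | ⟨-, hfalse⟩
          · omega
          · exact absurd hfalse not_false
        have hr2m : 2*m < r := by omega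
        have hfq : f q = q := hffix q hqA hqB
        have hfr : f r = r := hfix_out r hr2m
        omega
  · -- recover A
    ext x
    simp only [Finset.mem_filter, Finset.mem_Icc]
    constructor
    · rintro ⟨⟨h1x, h2x⟩, hlt'⟩
      rw [hwapp] at hlt'
      by_cases hxA : x ∈ A
      · exact hxA
      · exfalso
        by_cases hxB : x ∈ B
        · have := hB_gt x hxB; omega
        · have := hffix x hxA hxB; omega
    · intro hxA
      refine ⟨hrange x (Or.inl hxA), ?_⟩
      rw [hwapp]
      exact hA_lt x hxA

open DyckStep in
lemma count_take_eq_card_filter (l : List DyckStep) :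
    ∀ t, t ≤ l.length →
      ((Finset.range t).filter (fun k => l.getD k D = U)).card = (l.take t).count U := by
  intro t
  induction t with
  | zero => simp
  | succ t ih =>
    intro ht
    have ht' : t ≤ l.length := by omega
    have htlt : t < l.length := by omega
    rw [Finset.range_add_one, Finset.filter_insert]
    have htake : l.take (t+1) = l.take t ++ [l[t]] := by
      have := List.take_concat_get htlt
      rw [List.concat_eq_append] at this
      exact this.symm
    rw [htake, List.count_append]
    by_cases hU : l.getD t D = U
    · rw [if_pos hU, Finset.card_insert_of_notMem (by simp), ih ht']
      have hgl : l[t] = U := by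
        rwa [List.getD_eq_getElem l D htlt] at hU
      simp [hgl]
    · rw [if_neg hU, ih ht']
      have hgl : l[t] = D := by
        rcases (l[t]'htlt).dichotomy with h | h
        · exfalso; apply hU; rwa [List.getD_eq_getElem l D htlt]
        · exact h
      simp [hgl]

open DyckStep in
lemma count_U_add_count_D (l : List DyckStep) : l.count U + l.count D = l.length := by
  induction l with
  | nil => rfl
  | cons a t ih =>
    cases a <;> simp [List.count_cons] <;> omega

open DyckStep in
noncomputable def dyckToSet (p : DyckWord) : Finset ℕ :=
  ((Finset.range (p.toList.length)).filter (fun k => p.toList.getD k D = U)).image (· + 1)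

open DyckStep in
lemma dyckToSet_mem_ballotSet {m : ℕ} (p : DyckWord) (hp : p.semilength = m) :
    dyckToSet p ∈ ballotSet m := by
  classical
  have hlen : p.toList.length = 2 * m := by
    rw [← hp, ← DyckWord.two_mul_semilength_eq_length]
  have hcount : p.toList.count U = m := hp
  rw [mem_ballotSet]
  refine ⟨?_, ?_, ?_⟩
  · intro x hx
    simp only [dyckToSet, Finset.mem_image, Finset.mem_filter, Finset.mem_range] at hx
    obtain ⟨k, ⟨hk, -⟩, rfl⟩ := hx
    rw [hlen] at hk
    simp only [Finset.mem_Icc]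
    omega
  · rw [dyckToSet, Finset.card_image_of_injective _ (fun a b hab => by omega)]
    rw [count_take_eq_card_filter p.toList p.toList.length le_rfl, List.take_length, hcount]
  · intro t ht
    rw [Finset.mem_Icc] at ht
    have hinter : dyckToSet p ∩ Finset.Icc 1 t
        = ((Finset.range t).filter (fun k => p.toList.getD k D = U)).image (· + 1) := by
      ext x
      simp only [dyckToSet, Finset.mem_inter, Finset.mem_image, Finset.mem_filter,
        Finset.mem_range, Finset.mem_Icc]
      constructor
      · rintro ⟨⟨k, ⟨hk, hU⟩, rfl⟩, h1, h2⟩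
        exact ⟨k, ⟨by omega, hU⟩, rfl⟩
      · rintro ⟨k, ⟨hk, hU⟩, rfl⟩
        refine ⟨⟨k, ⟨by omega, hU⟩, rfl⟩, by omega, by omega⟩
    rw [hinter, Finset.card_image_of_injective _ (fun a b hab => by omega)]
    rw [count_take_eq_card_filter p.toList t (by omega)]
    have hDle := p.count_D_le_count_U t
    have hsum := count_U_add_count_D (p.toList.take t)
    rw [List.length_take, hlen] at hsum
    have : min t (2*m) = t := by omega
    rw [this] at hsum
    omega

open DyckStep in
lemma dyckToSet_inj {m : ℕ} (p q : DyckWord) (hp : p.semilength = m) (hq : q.semilength = m)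
    (h : dyckToSet p = dyckToSet q) : p = q := by
  classical
  have hlenp : p.toList.length = 2 * m := by
    rw [← hp, ← DyckWord.two_mul_semilength_eq_length]
  have hlenq : q.toList.length = 2 * m := by
    rw [← hq, ← DyckWord.two_mul_semilength_eq_length]
  have hmem : ∀ (l : List DyckStep) (_ : l.length = 2*m) (k : ℕ) (hk : k < 2*m),
      (k + 1 ∈ ((Finset.range l.length).filter (fun j => l.getD j D = U)).image (· + 1))
        ↔ l.getD k D = U := by
    intro l hl k hk
    simp only [Finset.mem_image, Finset.mem_filter, Finset.mem_range]
    constructor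
    · rintro ⟨j, ⟨hj, hU⟩, hEq⟩
      have : j = k := by omega
      rwa [← this]
    · intro hU
      exact ⟨k, ⟨by omega, hU⟩, rfl⟩
  ext1
  apply List.ext_getElem (by omega)
  intro k hk1 hk2
  have hk : k < 2 * m := by omega
  have h1 := hmem p.toList hlenp k hk
  have h2 := hmem q.toList hlenq k hk
  rw [show ((Finset.range p.toList.length).filter (fun j => p.toList.getD j D = U)).image (· + 1)
      = dyckToSet p from rfl, h] at h1
  rw [show ((Finset.range q.toList.length).filter (fun j => q.toList.getD j D = U)).image (· + 1)
      = dyckToSet q from rfl] at h2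
  have hgd : p.toList.getD k D = U ↔ q.toList.getD k D = U := h1.symm.trans h2
  rw [List.getD_eq_getElem p.toList D (by omega), List.getD_eq_getElem q.toList D (by omega)] at hgd
  rcases (p.toList[k]).dichotomy with hU | hD
  · rw [hU]
    exact (hgd.1 hU).symm
  · rcases (q.toList[k]).dichotomy with hU' | hD'
    · exfalso
      rw [hgd.2 hU'] at hD
      cases hD
    · rw [hD, hD']

lemma catalan_le_ballotSet_card (m : ℕ) : catalan m ≤ (ballotSet m).card := by
  classical
  have hF : Function.Injective
      (fun p : {p : DyckWord // p.semilength = m} =>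
        (⟨dyckToSet p.1, dyckToSet_mem_ballotSet p.1 p.2⟩ : {A // A ∈ ballotSet m})) := by
    intro p q hpq
    simp only [Subtype.mk.injEq] at hpq
    exact Subtype.ext (dyckToSet_inj p.1 q.1 p.2 q.2 hpq)
  have h := Fintype.card_le_of_injective _ hF
  rwa [DyckWord.card_dyckWord_semilength_eq_catalan, Fintype.card_coe] at h

lemma mi_moved_le {n : ℕ} {w : Equiv.Perm ℕ} (hw : IsInvolutionOn n w) :
    ∀ k, k ≤ n → w k ≤ n := by
  intro k hk
  by_cases hmove : w k = k
  · omega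
  · by_contra hgt
    push_neg at hgt
    have hfix : w (w k) = w k := by
      by_contra hne
      have := hw.1 (w k) hne
      omega
    have := w.injective hfix
    omega

lemma miSet_finite (n : ℕ) :
    {w : Equiv.Perm ℕ | IsInvolutionOn n w ∧ Avoids321 n w}.Finite := by
  classical
  apply Set.Finite.of_finite_image (f := fun (w : Equiv.Perm ℕ) =>
    (fun k : Fin (n+1) => (⟨min (w k.1) n, by omega⟩ : Fin (n+1))))
  · exact Set.toFinite _
  · intro w hw w' hw' hEq
    simp only [Set.mem_setOf_eq] at hw hw'
    have hfun : ∀ k : ℕ, k ≤ n → w k = w' k := by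
      intro k hk
      have h1 : min (w k) n = min (w' k) n := by
        have := congrFun hEq ⟨k, by omega⟩
        simpa using this
      have hb1 := mi_moved_le hw.1 k hk
      have hb2 := mi_moved_le hw'.1 k hk
      omega
    apply Equiv.ext
    intro k
    by_cases hk : k ≤ n
    · exact hfun k hk
    · have h1 : w k = k := by
        by_contra hne
        have := hw.1.1 k hne
        omega
      have h2 : w' k = k := by
        by_contra hne
        have := hw'.1.1 k hne
        omega
      rw [h1, h2]

lemma catalan_le_mi (n m : ℕ) (h2m : 2*m ≤ n) : catalan m ≤ mi n := by
  classical
  refine (catalan_le_ballotSet_card m).trans ?_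
  have hmain : ∀ A : Finset ℕ, ∃ w : Equiv.Perm ℕ, A ∈ ballotSet m →
      ((IsInvolutionOn n w ∧ Avoids321 n w) ∧
        (Finset.Icc 1 (2*m)).filter (fun x => x < w x) = A) := by
    intro A
    by_cases hA : A ∈ ballotSet m
    · obtain ⟨w, hw⟩ := ballot_to_mi n m h2m A hA
      exact ⟨w, fun _ => hw⟩
    · exact ⟨1, fun h => absurd h hA⟩
  choose F hF using hmain
  have hinj : Set.InjOn F ↑(ballotSet m) := by
    intro A hA A' hA' hEq
    rw [Finset.mem_coe] at hA hA'
    rw [← (hF A hA).2, ← (hF A' hA').2, hEq]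
  have himg : F '' ↑(ballotSet m) ⊆ {w : Equiv.Perm ℕ | IsInvolutionOn n w ∧ Avoids321 n w} := by
    rintro w ⟨A, hA, rfl⟩
    rw [Finset.mem_coe] at hA
    exact (hF A hA).1
  calc (ballotSet m).card = Set.ncard (↑(ballotSet m) : Set (Finset ℕ)) :=
        (Set.ncard_coe_finset _).symm
    _ = Set.ncard (F '' ↑(ballotSet m)) := (Set.ncard_image_of_injOn hinj).symm
    _ ≤ mi n := Set.ncard_le_ncard himg (miSet_finite n)

lemma four_le (m : ℕ) (hm : 4 ≤ m) : 4^m ≤ m * (m+1) * catalan m := by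
  have h1 := Nat.four_pow_lt_mul_centralBinom m hm
  have h2 := succ_mul_catalan_eq_centralBinom m
  calc 4^m ≤ m * m.centralBinom := h1.le
    _ = m * ((m+1) * catalan m) := by rw [h2]
    _ = m * (m+1) * catalan m := by ring

lemma ratio_bound (n : ℕ) (hn : 8 ≤ n) :
    (kiTotal n : ℝ) / (mi n : ℝ) ≤ (36/5) * (n:ℝ)^2 * (9/10)^n := by
  set m := n / 2 with hmdef
  have hm4 : 4 ≤ m := by omega
  have h2m : 2*m ≤ n := by omega
  have hn2m : n ≤ 2*m + 1 := by omega
  -- real bound on kiTotal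
  have hkiR : (kiTotal n : ℝ) * 5^(n+1) ≤ 2 * 9^(n+1) := by
    have := kiTotal_pow_bound n
    have hc : ((5^(n+1) * kiTotal n : ℕ) : ℝ) ≤ ((2 * 9^(n+1) : ℕ) : ℝ) := Nat.cast_le.2 this
    push_cast at hc
    linarith
  -- real bound on mi
  have hmiN : 4^m ≤ m * (m+1) * mi n :=
    le_trans (four_le m hm4) (Nat.mul_le_mul_left _ (catalan_le_mi n m h2m))
  have hmiR : (4:ℝ)^m ≤ (m:ℝ) * ((m:ℝ)+1) * (mi n : ℝ) := by
    have hc : ((4^m : ℕ) : ℝ) ≤ ((m * (m+1) * mi n : ℕ) : ℝ) := Nat.cast_le.2 hmiN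
    push_cast at hc
    linarith
  have hmi_pos : (0:ℝ) < (mi n : ℝ) := by
    by_contra hle
    push_neg at hle
    have h4 : (0:ℝ) < 4^m := by positivity
    have : (m:ℝ) * ((m:ℝ)+1) * (mi n : ℝ) ≤ 0 := by
      have hm0 : (0:ℝ) ≤ (m:ℝ) * ((m:ℝ)+1) := by positivity
      nlinarith
    linarith
  rw [div_le_iff₀ hmi_pos]
  -- key: kiTotal n ≤ (36/5) n² (9/10)^n * mi n
  have hki2 : (kiTotal n : ℝ) ≤ 2 * 9^(n+1) / 5^(n+1) := by
    rw [le_div_iff₀ (by positivity)]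
    linarith
  refine hki2.trans ?_
  -- suffices: 2*9^{n+1}/5^{n+1} ≤ (36/5) n² (9/10)^n * mi n
  have hmmn : (m:ℝ) * ((m:ℝ)+1) ≤ (n:ℝ)^2 := by
    have h1 : (m:ℝ) ≤ (n:ℝ)/2 := by
      have : (2*m : ℕ) ≤ n := h2m
      have := (Nat.cast_le (α := ℝ)).2 this
      push_cast at this
      linarith
    have h2 : (m:ℝ) + 1 ≤ (n:ℝ) := by
      have : m + 1 ≤ n := by omega
      have := (Nat.cast_le (α := ℝ)).2 this
      push_cast at this
      linarith
    have hn0 : (0:ℝ) ≤ (n:ℝ) := Nat.cast_nonneg n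
    nlinarith
  have h4m : (2:ℝ)^(n-1) ≤ (4:ℝ)^m := by
    have : (4:ℝ)^m = 2^(2*m) := by
      rw [pow_mul]; norm_num
    rw [this]
    apply pow_le_pow_right₀ (by norm_num)
    omega
  have h2n1 : (2:ℝ)^n = 2 * 2^(n-1) := by
    have hsplit : n = (n-1) + 1 := by omega
    nth_rewrite 1 [hsplit]
    rw [pow_succ]
    ring
  -- mi n ≥ 4^m / (m(m+1)) ≥ 2^(n-1)/n²
  have hmi2 : (2:ℝ)^(n-1) / (n:ℝ)^2 ≤ (mi n : ℝ) := by
    rw [div_le_iff₀ (by positivity)]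
    calc (2:ℝ)^(n-1) ≤ (4:ℝ)^m := h4m
      _ ≤ (m:ℝ) * ((m:ℝ)+1) * (mi n : ℝ) := hmiR
      _ ≤ (n:ℝ)^2 * (mi n : ℝ) := by
          apply mul_le_mul_of_nonneg_right hmmn (le_of_lt hmi_pos)
      _ = (mi n : ℝ) * (n:ℝ)^2 := by ring
  -- final chain
  have hgoal : 2 * (9:ℝ)^(n+1) / 5^(n+1) ≤ (36/5) * (n:ℝ)^2 * (9/10)^n * ((2:ℝ)^(n-1) / (n:ℝ)^2) := by
    have hrw : (36/5) * (n:ℝ)^2 * (9/10)^n * ((2:ℝ)^(n-1) / (n:ℝ)^2)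
        = (36/5) * ((9/10)^n * 2^(n-1)) := by
      field_simp
    rw [hrw]
    have h1 : ((9:ℝ)/10)^n * 2^(n-1) = (9/10)^n * 2^n / 2 := by
      rw [h2n1]; ring
    rw [h1]
    have h2 : ((9:ℝ)/10)^n * 2^n = (9/5)^n := by
      rw [← mul_pow]; norm_num
    rw [h2]
    have h3 : 2 * (9:ℝ)^(n+1) / 5^(n+1) = 2 * (9/5)^(n+1) := by
      rw [div_pow, mul_div_assoc]
    rw [h3, pow_succ]
    apply le_of_eq
    ring
  calc 2 * (9:ℝ)^(n+1) / 5^(n+1)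
      ≤ (36/5) * (n:ℝ)^2 * (9/10)^n * ((2:ℝ)^(n-1) / (n:ℝ)^2) := hgoal
    _ ≤ (36/5) * (n:ℝ)^2 * (9/10)^n * (mi n : ℝ) := by
        apply mul_le_mul_of_nonneg_left hmi2 (by positivity)


end Aux

/-- The proportion of Kostant involutions among all 321-avoiding involutions in `S_n`
tends to `0` as `n → ∞`. -/
theorem ki_div_mi_tendsto_zero :
    Filter.Tendsto (fun n : ℕ => (kiTotal n : ℝ) / (mi n : ℝ))
      Filter.atTop (nhds 0) := by
  apply squeeze_zero' (g := fun n : ℕ => (36/5) * (n:ℝ)^2 * (9/10)^n)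
  · exact Filter.Eventually.of_forall (fun n => by positivity)
  · exact Filter.eventually_atTop.2 ⟨8, fun n hn => ratio_bound n hn⟩
  · have base := tendsto_pow_const_div_const_pow_of_one_lt 2
      (show (1:ℝ) < 10/9 by norm_num)
    have hmul := base.const_mul (36/5 : ℝ)
    rw [mul_zero] at hmul
    apply hmul.congr
    intro n
    rw [show ((9:ℝ)/10) = ((10:ℝ)/9)⁻¹ by norm_num, inv_pow]
    field_simp
end

section
/- The sequence of real numbers r_n := ( Σ_{a=0}^{⌊n/2⌋} C(n−a, a) · n!·(n−2a+1)! / (a!·(n−2a)!·(n−a+1)!) ) / C_n, where C_n = (1/(n+1))·binom(2n, n) is the n-th Catalan number, tends to 0 as n → ∞. (Here the numerator counts the 321-avoiding permutations of S_n for which the answer to Kostant's problem is positive, and the denominator counts all 321-avoiding permutations of S_n.) -/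
open Filter Finset

lemma aux_choose_le_two_pow (m k : ℕ) : m.choose k ≤ 2 ^ m := by
  rcases le_or_gt k m with h | h
  · calc m.choose k ≤ ∑ i ∈ range (m + 1), m.choose i :=
        Finset.single_le_sum (fun i _ => Nat.zero_le _)
          (Finset.mem_range.mpr (Nat.lt_succ_of_le h))
    _ = 2 ^ m := Nat.sum_range_choose m
  · simp [Nat.choose_eq_zero_of_lt h]

lemma aux_key_nat (n a : ℕ) (ha : 2 * a ≤ n) :
    (n - a).choose a * n.factorial * (n - 2 * a + 1).factorial ≤
      2 ^ (n - a) * (n + 1).choose a *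
        (a.factorial * (n - 2 * a).factorial * (n - a + 1).factorial) := by
  have han : a ≤ n := by omega
  have h1 : (n - 2 * a + 1).factorial = (n - 2 * a + 1) * (n - 2 * a).factorial :=
    Nat.factorial_succ _
  have h2 : (n + 1).choose a * a.factorial * (n - a + 1).factorial = (n + 1).factorial := by
    have : n - a + 1 = n + 1 - a := by omega
    rw [this]
    exact Nat.choose_mul_factorial_mul_factorial (by omega)
  have h3 : (n - a).choose a * (n.factorial * (n - 2 * a + 1)) ≤
      2 ^ (n - a) * (n + 1).factorial := by
    have hc : (n - a).choose a ≤ 2 ^ (n - a) := aux_choose_le_two_pow _ _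
    have hf : n.factorial * (n - 2 * a + 1) ≤ (n + 1).factorial := by
      rw [Nat.factorial_succ (n := n)]
      calc n.factorial * (n - 2 * a + 1) ≤ n.factorial * (n + 1) :=
            Nat.mul_le_mul_left _ (by omega)
        _ = (n + 1) * n.factorial := Nat.mul_comm _ _
    exact Nat.mul_le_mul hc hf
  calc (n - a).choose a * n.factorial * (n - 2 * a + 1).factorial
      = (n - a).choose a * (n.factorial * (n - 2 * a + 1)) * (n - 2 * a).factorial := by
        rw [h1]; ring
    _ ≤ 2 ^ (n - a) * (n + 1).factorial * (n - 2 * a).factorial :=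
        Nat.mul_le_mul_right _ h3
    _ = 2 ^ (n - a) * (n + 1).choose a *
        (a.factorial * (n - 2 * a).factorial * (n - a + 1).factorial) := by
        rw [← h2]; ring

lemma aux_catalan_pos (n : ℕ) : 0 < catalan n := by
  rcases Nat.eq_zero_or_pos (catalan n) with h | h
  · have := succ_mul_catalan_eq_centralBinom n
    rw [h, Nat.mul_zero] at this
    exact absurd this.symm (Nat.centralBinom_pos n).ne'
  · exact h

/-- The proportion `(Σ_{a=0}^{⌊n/2⌋} C(n-a,a)·n!·(n-2a+1)!/(a!·(n-2a)!·(n-a+1)!)) / C_n`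
(Kostant positive 321-avoiding permutations among all 321-avoiding permutations of `S_n`,
where `C_n` is the `n`-th Catalan number) tends to `0` as `n → ∞`. -/
theorem kostant_positive_proportion_tendsto_zero :
    Filter.Tendsto (fun n : ℕ =>
        (∑ a ∈ Finset.range (n / 2 + 1),
          (((n - a).choose a * n.factorial * (n - 2 * a + 1).factorial : ℕ) : ℝ) /
            ((a.factorial * (n - 2 * a).factorial * (n - a + 1).factorial : ℕ) : ℝ)) /
          (catalan n : ℝ))
      Filter.atTop (nhds 0) := by
  -- the dominating sequence
  have hg : Tendsto (fun n : ℕ => 3 * ((n : ℝ) + 1) ^ 2 * (3 / 4 : ℝ) ^ n) atTop (nhds 0) := by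
    have hsum : Summable (fun n : ℕ => (n : ℝ) ^ 2 * (3 / 4 : ℝ) ^ n) :=
      summable_pow_mul_geometric_of_norm_lt_one 2
        (by rw [Real.norm_eq_abs, abs_of_pos] <;> norm_num)
    have h0 : Tendsto (fun n : ℕ => (n : ℝ) ^ 2 * (3 / 4 : ℝ) ^ n) atTop (nhds 0) :=
      hsum.tendsto_atTop_zero
    have h1 : Tendsto (fun n : ℕ => ((n + 1 : ℕ) : ℝ) ^ 2 * (3 / 4 : ℝ) ^ (n + 1)) atTop
        (nhds 0) := h0.comp (tendsto_add_atTop_nat 1)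
    have h2 := h1.const_mul (4 : ℝ)
    rw [mul_zero] at h2
    refine h2.congr fun n => ?_
    push_cast
    ring
  refine tendsto_of_tendsto_of_tendsto_of_le_of_le' tendsto_const_nhds hg ?_ ?_
  · filter_upwards with n
    have hc : (0 : ℝ) < (catalan n : ℝ) := by exact_mod_cast aux_catalan_pos n
    positivity
  · filter_upwards [eventually_ge_atTop 1] with n hn
    have hc : (0 : ℝ) < (catalan n : ℝ) := by exact_mod_cast aux_catalan_pos n
    -- Step A : the numerator sum is at most (3/2) * 3^n
    have stepA : (∑ a ∈ Finset.range (n / 2 + 1),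
        (((n - a).choose a * n.factorial * (n - 2 * a + 1).factorial : ℕ) : ℝ) /
          ((a.factorial * (n - 2 * a).factorial * (n - a + 1).factorial : ℕ) : ℝ)) ≤
        (3 / 2 : ℝ) * 3 ^ n := by
      have hterm : ∀ a ∈ Finset.range (n / 2 + 1),
          (((n - a).choose a * n.factorial * (n - 2 * a + 1).factorial : ℕ) : ℝ) /
            ((a.factorial * (n - 2 * a).factorial * (n - a + 1).factorial : ℕ) : ℝ) ≤
          (2 : ℝ) ^ n * (1 / 2 : ℝ) ^ a * ((n + 1).choose a : ℝ) := by
        intro a haa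
        rw [Finset.mem_range] at haa
        have ha : 2 * a ≤ n := by omega
        have hD : (0 : ℝ) <
            ((a.factorial * (n - 2 * a).factorial * (n - a + 1).factorial : ℕ) : ℝ) := by
          have : 0 < a.factorial * (n - 2 * a).factorial * (n - a + 1).factorial :=
            Nat.mul_pos (Nat.mul_pos a.factorial_pos (n - 2 * a).factorial_pos)
              (n - a + 1).factorial_pos
          exact_mod_cast this
        rw [div_le_iff₀ hD]
        have hkey := aux_key_nat n a ha
        have hcast : (((n - a).choose a * n.factorial * (n - 2 * a + 1).factorial : ℕ) : ℝ) ≤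
            ((2 ^ (n - a) * (n + 1).choose a *
              (a.factorial * (n - 2 * a).factorial * (n - a + 1).factorial) : ℕ) : ℝ) := by
          exact_mod_cast hkey
        refine hcast.trans (le_of_eq ?_)
        push_cast
        have hpow : (2 : ℝ) ^ (n - a) = 2 ^ n * (1 / 2 : ℝ) ^ a := by
          have h2a : (2 : ℝ) ^ (n - a) * 2 ^ a = 2 ^ n := by
            rw [← pow_add, Nat.sub_add_cancel (by omega : a ≤ n)]
          field_simp
          rw [one_div, inv_pow, eq_mul_inv_iff_mul_eq₀ (by positivity)]; exact h2a
        rw [hpow]; try ring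
      calc (∑ a ∈ Finset.range (n / 2 + 1),
            (((n - a).choose a * n.factorial * (n - 2 * a + 1).factorial : ℕ) : ℝ) /
              ((a.factorial * (n - 2 * a).factorial * (n - a + 1).factorial : ℕ) : ℝ)) ≤
          ∑ a ∈ Finset.range (n / 2 + 1),
            (2 : ℝ) ^ n * (1 / 2 : ℝ) ^ a * ((n + 1).choose a : ℝ) :=
            Finset.sum_le_sum hterm
        _ ≤ ∑ a ∈ Finset.range (n + 2),
            (2 : ℝ) ^ n * (1 / 2 : ℝ) ^ a * ((n + 1).choose a : ℝ) := by
            refine Finset.sum_le_sum_of_subset_of_nonneg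
              (Finset.range_subset_range.mpr (by omega)) ?_
            intro i _ _
            positivity
        _ = (2 : ℝ) ^ n * ∑ a ∈ Finset.range (n + 2),
            (1 / 2 : ℝ) ^ a * (1 : ℝ) ^ (n + 1 - a) * ((n + 1).choose a : ℝ) := by
            rw [Finset.mul_sum]
            refine Finset.sum_congr rfl fun a _ => ?_
            rw [one_pow]; ring
        _ = (2 : ℝ) ^ n * (1 / 2 + 1 : ℝ) ^ (n + 1) := by
            rw [add_pow (1 / 2 : ℝ) 1 (n + 1)]
        _ = (3 / 2 : ℝ) * 3 ^ n := by
            have : (1 / 2 + 1 : ℝ) = 3 / 2 := by norm_num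
            rw [this, pow_succ]
            rw [show (3 / 2 : ℝ) ^ n = 3 ^ n / 2 ^ n by rw [div_pow]]
            field_simp
    -- Step B : lower bound on the Catalan number
    have stepB : (4 : ℝ) ^ n ≤ 2 * (n : ℝ) * (((n : ℝ) + 1) * (catalan n : ℝ)) := by
      have := Nat.four_pow_le_two_mul_self_mul_centralBinom n hn
      rw [← succ_mul_catalan_eq_centralBinom] at this
      exact_mod_cast this
    -- combine
    rw [div_le_iff₀ hc]
    refine stepA.trans ?_
    have h34 : (3 : ℝ) ^ n = (3 / 4 : ℝ) ^ n * 4 ^ n := by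
      rw [← mul_pow]; norm_num
    have hp34 : (0 : ℝ) < (3 / 4 : ℝ) ^ n := by positivity
    have hn1 : (1 : ℝ) ≤ (n : ℝ) := by exact_mod_cast hn
    have hkey2 : (3 / 2 : ℝ) * 4 ^ n ≤ 3 * ((n : ℝ) + 1) ^ 2 * (catalan n : ℝ) := by
      have hstep : 2 * (n : ℝ) * (((n : ℝ) + 1) * (catalan n : ℝ)) ≤
          2 * ((n : ℝ) + 1) ^ 2 * (catalan n : ℝ) := by nlinarith [hc.le, hn1]
      nlinarith [stepB, hstep]
    calc (3 / 2 : ℝ) * 3 ^ n = (3 / 4 : ℝ) ^ n * ((3 / 2 : ℝ) * 4 ^ n) := by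
          rw [h34]; ring
      _ ≤ (3 / 4 : ℝ) ^ n * (3 * ((n : ℝ) + 1) ^ 2 * (catalan n : ℝ)) := by
          exact mul_le_mul_of_nonneg_left hkey2 hp34.le
      _ = 3 * ((n : ℝ) + 1) ^ 2 * (3 / 4 : ℝ) ^ n * (catalan n : ℝ) := by ring
end
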